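/- arXiv:1205.7051 — 5 statements merged into one kernel-verified Lean document; each statement's English description precedes it below -/
import Mathlib

section
/- For all integers n, k with 1 ≤ k ≤ n, the Bernoulli numbers satisfy the identity Σ_{i=0}^{⌊(k-1)/2⌋} C(2k-2i-1,k) · C(2n+1,2i+1) · B_{2n-2i} = (-1)^k · 2^{2k-2n-1} · Σ_{i=0}^{n-k} C(n-i,k) · C(2n+1,2i) · (2^{2i} − 2) · B_{2i}, where C(a,b) denotes the binomial coefficient and 2^{2i}−2 = 2(2^{2i-1}−1). -/
open PowerSeries Finset Nat
noncomputable section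
namespace BI

def E (a : ℚ) : ℚ⟦X⟧ := rescale a (exp ℚ)

lemma E_mul (a b : ℚ) : E a * E b = E (a + b) := exp_mul_exp_eq_exp_add a b

lemma E_one : E 1 = exp ℚ := by simp [E, rescale_one]

lemma coeff_E (a : ℚ) (m : ℕ) : coeff m (E a) = a ^ m / (m ! : ℚ) := by
  simp [E, coeff_rescale, coeff_exp, div_eq_mul_inv]

lemma rescale_E (a b : ℚ) : rescale b (E a) = E (a * b) := by
  simp [E, rescale_rescale]

lemma E_mul_E_neg (a : ℚ) : E a * E (-a) = 1 := by
  rw [E_mul]; simp [E, rescale_zero]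

lemma E_ne_zero (a : ℚ) : E a ≠ 0 := by
  intro h
  have := E_mul_E_neg a
  rw [h, zero_mul] at this
  exact one_ne_zero this.symm

/-- doubled sinh : 2 sinh X -/
def Df : ℚ⟦X⟧ := E 1 - E (-1)
/-- doubled cosh : 2 cosh X -/
def Gf : ℚ⟦X⟧ := E 1 + E (-1)
def Dh : ℚ⟦X⟧ := E (1/2) - E (-(1/2))
def Gh : ℚ⟦X⟧ := E (1/2) + E (-(1/2))

lemma rescale_Df : rescale (1/2 : ℚ) Df = Dh := by
  simp [Df, Dh, map_sub, rescale_E]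

lemma rescale_Gf : rescale (1/2 : ℚ) Gf = Gh := by
  simp [Gf, Gh, map_add, rescale_E]

lemma Dh_ne_zero : Dh ≠ 0 := by
  intro h
  have h1 : coeff 1 Dh = 1 := by
    simp [Dh, coeff_E]; norm_num
  rw [h] at h1; simp at h1

lemma X_ne_zero : (X : ℚ⟦X⟧) ≠ 0 := by
  intro h
  have h1 : coeff 1 (X : ℚ⟦X⟧) = 1 := by simp
  rw [h] at h1; simp at h1

lemma expm1_ne_zero : E 1 - 1 ≠ 0 := by
  intro h
  have h1 : coeff 1 (E 1 - 1) = 1 := by simp [coeff_E]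
  rw [h] at h1; simp at h1

/-- doubled bernoulli series: 2 X/(e^X - 1) + X, even -/
def B2 : ℚ⟦X⟧ := 2 * bernoulliPowerSeries ℚ + X

lemma hB2 : B2 * (E 1 - 1) = X * (E 1 + 1) := by
  have h := bernoulliPowerSeries_mul_exp_sub_one ℚ
  rw [E_one, B2]
  linear_combination (2 : ℚ⟦X⟧) * h

lemma E_half_sq : E (1/2) * E (1/2) = E 1 := by rw [E_mul]; norm_num

lemma E_half_inv : E (1/2) * E (-(1/2)) = 1 := E_mul_E_neg _

lemma key2 : B2 * Dh = X * Gh := by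
  apply mul_right_cancel₀ expm1_ne_zero
  calc B2 * Dh * (E 1 - 1) = Dh * (B2 * (E 1 - 1)) := by ring
    _ = Dh * (X * (E 1 + 1)) := by rw [hB2]
    _ = X * Gh * (E 1 - 1) := by
        rw [Dh, Gh, ← E_half_sq]
        linear_combination (-2 * X * E (1/2)) * E_half_inv

lemma two_C_half : (2 : ℚ⟦X⟧) * C (1/2) = 1 := by
  rw [show (2 : ℚ⟦X⟧) = C 2 from (map_ofNat (C (R := ℚ)) 2).symm, ← map_mul]
  norm_num

lemma hB2half : (2 * rescale (1/2 : ℚ) B2) * (E (1/2) - 1) = X * (E (1/2) + 1) := by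
  have h := congrArg (rescale (1/2 : ℚ)) hB2
  rw [map_mul, map_sub, map_one, rescale_E, map_mul, map_add, map_one, rescale_E, rescale_X] at h
  norm_num at h
  linear_combination 2 * h + (X * (E (1/2) + 1)) * two_C_half

lemma expm1_factor : E 1 - 1 = (E (1/2) - 1) * (E (1/2) + 1) := by
  rw [← E_half_sq]; ring

lemma key3 : (B2 - 2 * rescale (1/2 : ℚ) B2) * Dh = -(2 * X) := by
  apply mul_right_cancel₀ expm1_ne_zero
  have h2 : (2 * rescale (1/2 : ℚ) B2) * Dh * (E 1 - 1)
      = X * (E (1/2) + 1) * (E (1/2) + 1) * Dh := by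
    rw [expm1_factor]
    linear_combination (Dh * (E (1/2) + 1)) * hB2half
  have h1 : B2 * Dh * (E 1 - 1) = Dh * (X * (E 1 + 1)) := by
    linear_combination Dh * hB2
  calc (B2 - 2 * rescale (1/2 : ℚ) B2) * Dh * (E 1 - 1)
      = B2 * Dh * (E 1 - 1) - (2 * rescale (1/2 : ℚ) B2) * Dh * (E 1 - 1) := by ring
    _ = Dh * (X * (E 1 + 1)) - X * (E (1/2) + 1) * (E (1/2) + 1) * Dh := by rw [h1, h2]
    _ = -(2 * X) * (E 1 - 1) := by
        rw [Dh, ← E_half_sq]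
        linear_combination (2 * X) * E_half_inv

/-- reverse Bessel polynomials, with argument `s*X` -/
def th (s : ℚ) : ℕ → ℚ⟦X⟧
  | 0 => 1
  | 1 => 1 + C s * X
  | (k+2) => C (2*(k:ℚ)+3) * th s (k+1) + X^2 * th s k

lemma coeff_th (s : ℚ) : ∀ (k m : ℕ), k < m → coeff m (th s k) = 0
  | 0, m, h => by
    rw [th, coeff_one, if_neg (by omega)]
  | 1, m, h => by
    rw [th, map_add, coeff_one, coeff_C_mul, coeff_X, if_neg (by omega), if_neg (by omega)]
    simp
  | (k+2), m, h => by
    rw [th, map_add, coeff_C_mul, coeff_th s (k+1) m (by omega), mul_zero, zero_add,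
      show m = (m-2) + 2 by omega, coeff_X_pow_mul, coeff_th s k (m-2) (by omega)]

def T (k : ℕ) : ℚ⟦X⟧ := th 1 k + th (-1) k

lemma T_zero : T 0 = 2 := by norm_num [T, th]
lemma T_one : T 1 = 2 := by
  rw [T, th, th]
  have : C (1:ℚ) + C (-1:ℚ) = 0 := by rw [← map_add]; norm_num
  linear_combination X * this
lemma T_rec (k : ℕ) : T (k+2) = C (2*(k:ℚ)+3) * T (k+1) + X^2 * T k := by
  rw [T, th, th, T, T]; ring

lemma coeff_T (k m : ℕ) (h : k < m) : coeff m (T k) = 0 := by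
  rw [T, map_add, coeff_th _ _ _ h, coeff_th _ _ _ h, add_zero]

/-- cast form of choose_succ_right_eq -/
lemma L1 (j k : ℕ) : ((k:ℚ)+1) * (j.choose (k+1) : ℚ) = ((j:ℚ) - (k:ℚ)) * (j.choose k : ℚ) := by
  rcases le_or_gt k j with h | h
  · have := Nat.choose_succ_right_eq j k
    have hc : ((j.choose (k+1) * (k+1) : ℕ) : ℚ) = ((j.choose k * (j - k) : ℕ) : ℚ) := by
      exact_mod_cast congrArg (Nat.cast (R := ℚ)) this
    push_cast [Nat.cast_sub h] at hc
    linarith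
  · rw [Nat.choose_eq_zero_of_lt h, Nat.choose_eq_zero_of_lt (by omega)]
    norm_num

lemma L2 (j k : ℕ) : ((j:ℚ)+1) * (j.choose k : ℚ) = ((k:ℚ)+1) * ((j+1).choose (k+1) : ℚ) := by
  have := Nat.add_one_mul_choose_eq j k
  have hc : (((j+1) * j.choose k : ℕ) : ℚ) = (((j+1).choose (k+1) * (k+1) : ℕ) : ℚ) := by
    exact_mod_cast congrArg (Nat.cast (R := ℚ)) this
  push_cast at hc
  linarith

lemma Hcore (j k : ℕ) :
    4*((k:ℚ)+1)*((k:ℚ)+2)*(((j+1).choose (k+2) : ℚ))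
      + 2*(2*(k:ℚ)+3)*((k:ℚ)+1)*(((j+1).choose (k+1) : ℚ))
    = (2*(j:ℚ)+2)*(2*(j:ℚ)+3)*((j.choose k : ℚ)) := by
  have h1 := L1 (j+1) (k+1)
  have h2 := L2 j k
  push_cast at h1 h2
  simp only [show k+1+1 = k+2 from rfl] at h1
  linear_combination 4*((k:ℚ)+1)*h1 - (4*(j:ℚ)+6)*h2

lemma Rcore (a k : ℕ) :
    ((k:ℚ)+1)*((k:ℚ)+2)*(((a+2).choose (k+2) : ℚ))
    = 2*(2*(k:ℚ)+3)*((k:ℚ)+1)*((a.choose (k+1) : ℚ))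
      + (2*(k:ℚ)+2-(a:ℚ))*(2*(k:ℚ)+1-(a:ℚ))*((a.choose k : ℚ)) := by
  have r1 := L1 a k
  have rP1 : (((a+2).choose (k+2) : ℚ)) = ((a+1).choose (k+1) : ℚ) + ((a+1).choose (k+2) : ℚ) := by
    rw [show a+2 = (a+1)+1 from rfl, Nat.choose_succ_succ (a+1) (k+1)]
    push_cast; ring
  have r4 := L1 (a+1) (k+1)
  have rP2 : (((a+1).choose (k+1) : ℚ)) = (a.choose k : ℚ) + (a.choose (k+1) : ℚ) := by
    rw [Nat.choose_succ_succ a k]; push_cast; ring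
  push_cast at r1 r4
  linear_combination ((k:ℚ)+1)*((k:ℚ)+2)*rP1 + ((k:ℚ)+1)*r4 + ((k:ℚ)+1)*((a:ℚ)+2)*rP2
    + ((a:ℚ)-4*(k:ℚ)-4)*r1
lemma fact_nz (k : ℕ) : ((k ! : ℚ)) ≠ 0 := Nat.cast_ne_zero.mpr (Nat.factorial_ne_zero k)

lemma coeff_Df (m : ℕ) : coeff m Df = (1 - (-1:ℚ)^m) / (m ! : ℚ) := by
  rw [Df, map_sub, coeff_E, coeff_E, one_pow]; ring

lemma coeff_Gf (m : ℕ) : coeff m Gf = (1 + (-1:ℚ)^m) / (m ! : ℚ) := by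
  rw [Gf, map_add, coeff_E, coeff_E, one_pow]; ring

def Rc (k m : ℕ) : ℚ :=
  if m % 2 = 1 ∧ m ≤ k then ((2*k - m).choose k : ℚ) * 2^m * (k ! : ℚ) / (2^k * (m ! : ℚ)) else 0

def Rs (k : ℕ) : ℚ⟦X⟧ := mk (Rc k)

def Hcf (k m : ℕ) : ℚ :=
  if m % 2 = 1 then 2^k * (k ! : ℚ) * (((m-1)/2).choose k : ℚ) / (m ! : ℚ) else 0

def Hs (k : ℕ) : ℚ⟦X⟧ := mk (Hcf k)

lemma coeff_two_mul (f : ℚ⟦X⟧) (m : ℕ) : coeff m (2 * f) = 2 * coeff m f := by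
  rw [show (2:ℚ⟦X⟧) = C 2 from (map_ofNat _ 2).symm, coeff_C_mul]

lemma Rs_zero : Rs 0 = 0 := by
  ext m
  rw [Rs, coeff_mk, Rc, if_neg (by omega)]
  simp

lemma Rs_one : Rs 1 = X := by
  ext m
  rw [Rs, coeff_mk, coeff_X, Rc]
  by_cases h : m = 1
  · subst h
    norm_num [Nat.factorial]
  · rw [if_neg (by omega), if_neg h]

lemma Hs_zero : 2 * Hs 0 = Df := by
  ext m
  rw [coeff_two_mul, Hs, coeff_mk, coeff_Df, Hcf]
  rcases Nat.even_or_odd m with he | ho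
  · have h2 := Nat.even_iff.mp he
    rw [if_neg (by omega), he.neg_one_pow]
    norm_num
  · have h2 := Nat.odd_iff.mp ho
    rw [if_pos h2, ho.neg_one_pow, Nat.choose_zero_right]
    norm_num [Nat.factorial_zero, div_eq_mul_inv]

lemma Hs_one : 2 * Hs 1 = X * Gf - Df := by
  ext m
  rw [coeff_two_mul, Hs, coeff_mk, map_sub, coeff_Df, Hcf]
  rcases m with _ | M
  · rw [if_neg (by omega)]
    simp
  · rw [coeff_succ_X_mul, coeff_Gf]
    rcases Nat.even_or_odd M with he | ho
    · -- M even, m = M+1 odd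
      obtain ⟨j, rfl⟩ := he
      rw [if_pos (by omega)]
      rw [show (j + j + 1 - 1)/2 = j by omega, Nat.choose_one_right]
      have hf : (((j+j+1) ! : ℚ)) = (2*(j:ℚ)+1) * ((j+j) ! : ℚ) := by
        rw [show j+j+1 = (j+j)+1 from rfl, Nat.factorial_succ]
        push_cast; ring
      have h1 : ((-1:ℚ))^(j+j) = 1 := Even.neg_one_pow ⟨j, rfl⟩
      have h2 : ((-1:ℚ))^(j+j+1) = -1 := Odd.neg_one_pow ⟨j, by ring⟩
      rw [hf, h1, h2]
      have := fact_nz (j+j)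
      field_simp
      ring
    · -- M odd, m = M+1 even
      obtain ⟨j, rfl⟩ := ho
      rw [if_neg (by omega)]
      have h1 : ((-1:ℚ))^(2*j+1) = -1 := Odd.neg_one_pow ⟨j, rfl⟩
      have h2 : ((-1:ℚ))^(2*j+1+1) = 1 := Even.neg_one_pow ⟨j+1, by ring⟩
      rw [h1, h2]
      ring
lemma coeff_X2_mul (f : ℕ → ℚ) (m : ℕ) :
    coeff m (X^2 * PowerSeries.mk f) = if 2 ≤ m then f (m-2) else 0 := by
  rw [coeff_X_pow_mul']
  split_ifs with h
  · rw [coeff_mk]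
  · rfl

lemma Hrec (k : ℕ) : Hs (k+2) = X^2 * Hs k - C (2*(k:ℚ)+3) * Hs (k+1) := by
  ext m
  rw [map_sub, coeff_C_mul, Hs, Hs, Hs, coeff_X2_mul, coeff_mk, coeff_mk]
  by_cases hodd : m % 2 = 1
  · rcases Nat.lt_or_ge m 2 with h1 | h2
    · have hm : m = 1 := by omega
      subst hm
      rw [if_neg (by omega), Hcf, Hcf, if_pos hodd, if_pos hodd]
      norm_num [Nat.choose_zero_succ]
    · obtain ⟨j, rfl⟩ : ∃ j, m = 2*j+3 := ⟨(m-3)/2, by omega⟩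
      rw [if_pos (by omega), Hcf, Hcf, Hcf, if_pos hodd, if_pos hodd, if_pos (by omega)]
      rw [show (2*j+3-1)/2 = j+1 by omega, show 2*j+3-2 = 2*j+1 by omega,
        show (2*j+1-1)/2 = j by omega]
      have hf3 : ((2*j+3)! : ℚ) = (2*(j:ℚ)+3)*(2*(j:ℚ)+2)*((2*j+1)! : ℚ) := by
        rw [show 2*j+3 = (2*j+2)+1 from rfl, Nat.factorial_succ,
          show 2*j+2 = (2*j+1)+1 from rfl, Nat.factorial_succ]
        push_cast; ring
      have hfk2 : ((k+2)! : ℚ) = ((k:ℚ)+2)*((k:ℚ)+1)*(k ! : ℚ) := by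
        rw [show k+2 = (k+1)+1 from rfl, Nat.factorial_succ, Nat.factorial_succ]
        push_cast; ring
      have hfk1 : ((k+1)! : ℚ) = ((k:ℚ)+1)*(k ! : ℚ) := by
        rw [Nat.factorial_succ]; push_cast; ring
      rw [hf3, hfk2, hfk1]
      have core := Hcore j k
      have h4 := fact_nz (2*j+1)
      have h5 := fact_nz k
      have h6 : ((2:ℚ))^k ≠ 0 := pow_ne_zero _ two_ne_zero
      have hj2 : (2*(j:ℚ)+2) ≠ 0 := by positivity
      have hj3 : (2*(j:ℚ)+3) ≠ 0 := by positivity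
      field_simp
      linear_combination (2:ℚ)^k * core
  · rw [Hcf, Hcf, Hcf, if_neg hodd, if_neg hodd]
    split_ifs with ha hb
    · omega
    · ring
    · ring
lemma Rrec (k : ℕ) : Rs (k+2) = C (2*(k:ℚ)+3) * Rs (k+1) + X^2 * Rs k := by
  ext m
  rw [map_add, coeff_C_mul, Rs, Rs, Rs, coeff_X2_mul, coeff_mk, coeff_mk]
  by_cases hodd : m % 2 = 1
  · rcases Nat.lt_or_ge m 2 with h1 | h2
    · have hm : m = 1 := by omega
      subst hm
      rw [if_neg (by omega), Rc, Rc, if_pos ⟨hodd, by omega⟩, if_pos ⟨hodd, by omega⟩]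
      rw [show 2*(k+2) - 1 = (2*k+1)+2 by omega, show 2*(k+1) - 1 = 2*k+1 by omega]
      have hsym : (((2*k+1).choose (k+1) : ℚ)) = ((2*k+1).choose k : ℚ) := by
        have := Nat.choose_symm (by omega : k ≤ 2*k+1)
        rw [show 2*k+1-k = k+1 by omega] at this
        exact_mod_cast congrArg (Nat.cast (R := ℚ)) this
      have hP : (((2*k+2).choose (k+1) : ℚ)) = ((2*k+1).choose k : ℚ) + ((2*k+1).choose (k+1) : ℚ) := by
        rw [show 2*k+2 = (2*k+1)+1 from rfl, Nat.choose_succ_succ]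
        push_cast; ring
      have hP2 : (((2*k+1+2).choose (k+2) : ℚ)) = ((2*k+2).choose (k+1) : ℚ) + ((2*k+2).choose (k+2) : ℚ) := by
        rw [show 2*k+1+2 = (2*k+2)+1 from rfl, Nat.choose_succ_succ]
        push_cast; ring
      have hsym2 : (((2*k+2).choose (k+2) : ℚ)) = ((2*k+2).choose k : ℚ) := by
        have := Nat.choose_symm (by omega : k ≤ 2*k+2)
        rw [show 2*k+2-k = k+2 by omega] at this
        exact_mod_cast congrArg (Nat.cast (R := ℚ)) this
      have hL1 : ((k:ℚ)+1) * (((2*k+2).choose (k+1)) : ℚ) = ((2*k+2:ℚ) - k) * (((2*k+2).choose k) : ℚ) := by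
        have := L1 (2*k+2) k
        push_cast at this ⊢
        linarith
      have hfk2 : ((k+2)! : ℚ) = ((k:ℚ)+2)*((k:ℚ)+1)*(k ! : ℚ) := by
        rw [show k+2 = (k+1)+1 from rfl, Nat.factorial_succ, Nat.factorial_succ]
        push_cast; ring
      have hfk1 : ((k+1)! : ℚ) = ((k:ℚ)+1)*(k ! : ℚ) := by
        rw [Nat.factorial_succ]; push_cast; ring
      rw [hP, hsym] at hL1
      rw [hP2, hP, hsym2, hsym, hfk2, hfk1, Nat.factorial_one, Nat.cast_one, mul_one,
        mul_one, add_zero, ← mul_div_assoc, div_eq_div_iff (by positivity) (by positivity)]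
      linear_combination (-(4:ℚ) * 2^k * ((k:ℚ)+1) * (k ! : ℚ)) * hL1
    · obtain ⟨j, rfl⟩ : ∃ j, m = 2*j+3 := ⟨(m-3)/2, by omega⟩
      by_cases hle : 2*j+3 ≤ k+1
      · obtain ⟨e, rfl⟩ : ∃ e, k = 2*j+2+e := ⟨k-(2*j+2), by omega⟩
        rw [if_pos (by omega), Rc, Rc, Rc, if_pos ⟨hodd, by omega⟩, if_pos ⟨hodd, by omega⟩,
          if_pos ⟨by omega, by omega⟩]
        rw [show 2*(2*j+2+e+2) - (2*j+3) = (2*j+2*e+3)+2 by omega,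
          show 2*(2*j+2+e+1) - (2*j+3) = 2*j+2*e+3 by omega,
          show 2*(2*j+2+e) - (2*j+3-2) = 2*j+2*e+3 by omega,
          show 2*j+3-2 = 2*j+1 by omega]
        have hf3 : ((2*j+3)! : ℚ) = (2*(j:ℚ)+3)*(2*(j:ℚ)+2)*((2*j+1)! : ℚ) := by
          rw [show 2*j+3 = (2*j+2)+1 from rfl, Nat.factorial_succ,
            show 2*j+2 = (2*j+1)+1 from rfl, Nat.factorial_succ]
          push_cast; ring
        have hfk2 : ((2*j+2+e+2)! : ℚ) = ((2*j+2+e:ℚ)+2)*((2*j+2+e:ℚ)+1)*((2*j+2+e) ! : ℚ) := by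
          rw [show 2*j+2+e+2 = (2*j+2+e+1)+1 from rfl, Nat.factorial_succ, Nat.factorial_succ]
          push_cast; ring
        have hfk1 : ((2*j+2+e+1)! : ℚ) = ((2*j+2+e:ℚ)+1)*((2*j+2+e) ! : ℚ) := by
          rw [Nat.factorial_succ]; push_cast; ring
        rw [hf3, hfk2, hfk1]
        have core := Rcore (2*j+2*e+3) (2*j+2+e)
        push_cast at core ⊢
        have h4 := fact_nz (2*j+1)
        have h5 := fact_nz (2*j+2+e)
        have h6 : ((2:ℚ))^(2*j+2+e) ≠ 0 := pow_ne_zero _ two_ne_zero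
        have hd1 : ((2:ℚ))^(2*j+2+e+2) * ((2*(j:ℚ)+3) * ((2*(j:ℚ)+2) * ((2*j+1)! : ℚ))) ≠ 0 := by positivity
        rw [← mul_div_assoc, div_add_div _ _ (by positivity) (by positivity),
          div_eq_div_iff (by positivity) (by positivity)]
        linear_combination ((2:ℚ)^(2*j+3) * ((2*j+2+e)! : ℚ) * 2^(2*j+2+e+1) * (2*(j:ℚ)+3)
          * (2*(j:ℚ)+2) * ((2*j+1)! :ℚ) * 2^(2*j+2+e) * ((2*j+1)! :ℚ)) * core
      · by_cases heq : 2*j+3 = k+2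
        · have hk : k = 2*j+1 := by omega
          subst hk
          rw [if_pos (by omega), Rc, Rc, Rc, if_pos ⟨hodd, by omega⟩, if_neg (by omega),
            if_pos ⟨by omega, by omega⟩]
          rw [show 2*(2*j+1+2) - (2*j+3) = 2*j+3 by omega,
            show 2*(2*j+1) - (2*j+3-2) = 2*j+1 by omega, show 2*j+3-2 = 2*j+1 by omega,
            Nat.choose_self, Nat.choose_self]
          have h4 := (fact_nz (2*j+1))
          have h5 := (fact_nz (2*j+3))
          push_cast
          rw [show 2*j+1+2 = 2*j+3 from by omega, one_mul, one_mul, div_self (by positivity),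
            div_self (by positivity)]
          ring
        · rw [if_pos (by omega), Rc, Rc, Rc, if_neg (by omega), if_neg (by omega),
            if_neg (by omega)]
          ring
  · rw [Rc, Rc, if_neg (by omega), if_neg (by omega)]
    split_ifs with ha
    · rw [Rc, if_neg (by omega)]
      ring
    · ring
lemma Mlem : ∀ k : ℕ, 2 * Gf * Rs k + ((-1 : ℚ⟦X⟧))^k * 4 * Hs k = T k * Df
  | 0 => by
    rw [Rs_zero, T_zero]
    linear_combination (2 : ℚ⟦X⟧) * Hs_zero
  | 1 => by
    rw [Rs_one, T_one]
    linear_combination (-2 : ℚ⟦X⟧) * Hs_one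
  | (k+2) => by
    have ih0 := Mlem k
    have ih1 := Mlem (k+1)
    rw [Rrec, Hrec, T_rec]
    linear_combination (C (2*(k:ℚ)+3)) * ih1 + X^2 * ih0

lemma chain (k : ℕ) :
    2 * (B2 * rescale (1/2:ℚ) (Rs k))
      + ((-1 : ℚ⟦X⟧))^(k+1) * 2 * ((B2 - 2 * rescale (1/2:ℚ) B2) * rescale (1/2:ℚ) (Hs k))
    = X * rescale (1/2:ℚ) (T k) := by
  apply mul_right_cancel₀ Dh_ne_zero
  have h1 := congrArg (rescale (1/2:ℚ)) (Mlem k)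
  simp only [map_add, map_mul, map_pow, map_neg, map_one, map_ofNat] at h1
  rw [rescale_Gf, rescale_Df] at h1
  linear_combination (2 * rescale (1/2:ℚ) (Rs k)) * key2
    + (((-1 : ℚ⟦X⟧))^(k+1) * 2 * rescale (1/2:ℚ) (Hs k)) * key3 + X * h1

lemma coeff_chain (n k : ℕ) (hk : 1 ≤ k) (hkn : k ≤ n) :
    coeff (2*n+1) (B2 * rescale (1/2:ℚ) (Rs k))
      = (-1:ℚ)^k * coeff (2*n+1) ((B2 - 2 * rescale (1/2:ℚ) B2) * rescale (1/2:ℚ) (Hs k)) := by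
  have h := congrArg (coeff (2*n+1)) (chain k)
  have e1 : ((-1 : ℚ⟦X⟧))^(k+1) * 2 = C ((-1:ℚ)^(k+1) * 2) := by
    rw [map_mul, map_pow, map_neg, map_one, map_ofNat]
  have e2 : coeff (2*n+1) (X * rescale (1/2:ℚ) (T k)) = 0 := by
    rw [show 2*n+1 = (2*n)+1 from rfl, coeff_succ_X_mul, coeff_rescale,
      coeff_T k (2*n) (by omega), mul_zero]
  rw [map_add, coeff_two_mul, e1, coeff_C_mul, e2] at h
  have e3 : ((-1:ℚ))^(k+1) = -(-1:ℚ)^k := by rw [pow_succ]; ring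
  rw [e3] at h
  linarith
lemma coeff_B2 (m : ℕ) : coeff m B2 = if m = 1 then 0 else 2 * bernoulli m / (m ! : ℚ) := by
  rw [B2, map_add, coeff_two_mul, coeff_X, bernoulliPowerSeries, coeff_mk]
  split_ifs with h
  · subst h; rw [bernoulli_one]; norm_num
  · simp only [Algebra.algebraMap_self, RingHom.id_apply, add_zero]
    ring

lemma F1 (n k : ℕ) (hk : 1 ≤ k) (hkn : k ≤ n) :
    coeff (2*n+1) (B2 * rescale (1/2:ℚ) (Rs k))
    = (2 * (k ! : ℚ) / (((2*n+1)! : ℚ) * 2^k)) *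
        ∑ i ∈ Finset.range ((k + 1) / 2),
          (Nat.choose (2 * k - 2 * i - 1) k : ℚ) * (Nat.choose (2 * n + 1) (2 * i + 1))
            * bernoulli (2 * n - 2 * i) := by
  have himg : Finset.filter (fun q => q % 2 = 1 ∧ q ≤ k) (Finset.range (2*n+2))
      = Finset.image (fun i => 2*i+1) (Finset.range ((k+1)/2)) := by
    ext q
    simp only [Finset.mem_filter, Finset.mem_range, Finset.mem_image]
    constructor
    · rintro ⟨hq, hodd, hle⟩
      exact ⟨q/2, by omega, by omega⟩
    · rintro ⟨i, hi, rfl⟩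
      omega
  rw [mul_comm B2 (rescale (1/2:ℚ) (Rs k)), coeff_mul, Finset.Nat.sum_antidiagonal_eq_sum_range_succ_mk,
    ← Finset.sum_filter_of_ne (p := fun q => q % 2 = 1 ∧ q ≤ k) (fun q hq hne => ?_), himg,
    Finset.sum_image (fun a _ b _ hab => by omega), Finset.mul_sum]
  · apply Finset.sum_congr rfl
    intro i hi
    rw [Finset.mem_range] at hi
    rw [coeff_rescale, Rs, coeff_mk, Rc, if_pos ⟨by omega, by omega⟩, coeff_B2,
      if_neg (by omega), show 2*n+1-(2*i+1) = 2*n-2*i from by omega,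
      show 2*k-(2*i+1) = 2*k-2*i-1 from by omega,
      Nat.cast_choose ℚ (show 2*i+1 ≤ 2*n+1 by omega),
      show 2*n+1-(2*i+1) = 2*n-2*i from by omega]
    have h1 := fact_nz (2*i+1)
    have h2 := fact_nz (2*n-2*i)
    have h3 := fact_nz k
    have h4 := fact_nz (2*n+1)
    have h5 : ((2:ℚ))^k ≠ 0 := pow_ne_zero _ two_ne_zero
    have h6 : ((2:ℚ))^(2*i+1) ≠ 0 := pow_ne_zero _ two_ne_zero
    field_simp
    have h7 : ((1:ℚ)/2)^(2*i) * 2^(2*i) = 1 := by rw [← mul_pow]; norm_num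
    linear_combination ((2*k-2*i-1).choose k : ℚ) * bernoulli (2*n-2*i) * h7
  · -- vanishing off the filter
    rw [coeff_rescale, Rs, coeff_mk] at hne
    by_contra hP
    rw [Rc, if_neg hP] at hne
    simp at hne

lemma F2 (n k : ℕ) (hk : 1 ≤ k) (hkn : k ≤ n) :
    coeff (2*n+1) ((B2 - 2 * rescale (1/2:ℚ) B2) * rescale (1/2:ℚ) (Hs k))
    = (2 * (k ! : ℚ) / (((2*n+1)! : ℚ) * 2^k)) *
        ((2:ℚ) ^ (2 * (k : ℤ) - 2 * n - 1) *
          ∑ i ∈ Finset.range (n - k + 1),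
            (Nat.choose (n - i) k : ℚ) * (Nat.choose (2 * n + 1) (2 * i))
              * (2 ^ (2 * i) - 2) * bernoulli (2 * i)) := by
  have hzpow : (2:ℚ) ^ (2 * (k : ℤ) - 2 * n - 1) = 2^(2*k) / 2^(2*n+1) := by
    rw [show 2 * (k : ℤ) - 2 * n - 1 = ((2*k : ℕ) : ℤ) - ((2*n+1 : ℕ) : ℤ) by push_cast; ring,
      zpow_sub₀ (two_ne_zero), zpow_natCast, zpow_natCast]
  have hext : ∑ i ∈ Finset.range (n - k + 1),
        (Nat.choose (n - i) k : ℚ) * (Nat.choose (2 * n + 1) (2 * i))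
          * (2 ^ (2 * i) - 2) * bernoulli (2 * i)
      = ∑ i ∈ Finset.range (n + 1),
        (Nat.choose (n - i) k : ℚ) * (Nat.choose (2 * n + 1) (2 * i))
          * (2 ^ (2 * i) - 2) * bernoulli (2 * i) := by
    apply Finset.sum_subset
    · intro x hx
      rw [Finset.mem_range] at hx ⊢
      omega
    · intro x hx hx2
      rw [Finset.mem_range] at hx hx2
      rw [Nat.choose_eq_zero_of_lt (by omega)]
      push_cast
      ring
  have hrefl : ∑ i ∈ Finset.range (n + 1),
        (Nat.choose (n - i) k : ℚ) * (Nat.choose (2 * n + 1) (2 * i))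
          * (2 ^ (2 * i) - 2) * bernoulli (2 * i)
      = ∑ j ∈ Finset.range (n + 1),
        (Nat.choose (n - (n - j)) k : ℚ) * (Nat.choose (2 * n + 1) (2 * (n - j)))
          * (2 ^ (2 * (n - j)) - 2) * bernoulli (2 * (n - j)) := by
    exact (Finset.sum_range_reflect _ _).symm
  rw [hzpow, hext, hrefl]
  have himg : Finset.filter (fun q => q % 2 = 1) (Finset.range (2*n+2))
      = Finset.image (fun j => 2*j+1) (Finset.range (n+1)) := by
    ext q
    simp only [Finset.mem_filter, Finset.mem_range, Finset.mem_image]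
    constructor
    · rintro ⟨hq, hodd⟩
      exact ⟨q/2, by omega, by omega⟩
    · rintro ⟨j, hj, rfl⟩
      omega
  rw [mul_comm (B2 - 2 * rescale (1/2:ℚ) B2) (rescale (1/2:ℚ) (Hs k)), coeff_mul,
    Finset.Nat.sum_antidiagonal_eq_sum_range_succ_mk,
    ← Finset.sum_filter_of_ne (p := fun q => q % 2 = 1) (fun q hq hne => ?_), himg,
    Finset.sum_image (fun a _ b _ hab => by omega), Finset.mul_sum, Finset.mul_sum]
  · apply Finset.sum_congr rfl
    intro j hj
    rw [Finset.mem_range] at hj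
    have hsymm : ((2*n+1).choose (2*(n-j)) : ℚ) = ((2*n+1).choose (2*j+1) : ℚ) := by
      have := Nat.choose_symm (show 2*j+1 ≤ 2*n+1 by omega)
      rw [show 2*n+1-(2*j+1) = 2*(n-j) by omega] at this
      exact_mod_cast congrArg (Nat.cast (R := ℚ)) this
    rw [coeff_rescale, Hs, coeff_mk, Hcf, if_pos (by omega),
      show (2*j+1-1)/2 = j from by omega, map_sub, coeff_two_mul, coeff_rescale, coeff_B2,
      if_neg (by omega), show 2*n+1-(2*j+1) = 2*n-2*j from by omega,
      hsymm, show n-(n-j) = j from by omega,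
      Nat.cast_choose ℚ (show 2*j+1 ≤ 2*n+1 by omega),
      show 2*n+1-(2*j+1) = 2*n-2*j from by omega]
    obtain ⟨d, rfl⟩ : ∃ d, n = j + d := ⟨n - j, by omega⟩
    rw [show 2*(j+d)-2*j = 2*d from by omega, show 2*((j+d)-j) = 2*d from by omega]
    have h1 := fact_nz (2*j+1)
    have h2 := fact_nz (2*d)
    have h3 := fact_nz k
    have h4 := fact_nz (2*(j+d)+1)
    have h5 : ((2:ℚ))^k ≠ 0 := pow_ne_zero _ two_ne_zero
    have h6 : ((2:ℚ))^(2*j+1) ≠ 0 := pow_ne_zero _ two_ne_zero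
    field_simp
    have hu : ((1:ℚ)/2)^(2*j) * 2^(2*j) = 1 := by rw [← mul_pow]; norm_num
    have hv : ((1:ℚ)/2)^(2*d) * 2^(2*d) = 1 := by rw [← mul_pow]; norm_num
    linear_combination (-((j.choose k : ℚ) * bernoulli (2*d) * 2^(2*k) * 2) * (((1:ℚ)/2)^(2*d) * 2^(2*d))
      + (j.choose k : ℚ) * bernoulli (2*d) * 2^(2*k) * 2^(2*d)) * hu
      - ((j.choose k : ℚ) * bernoulli (2*d) * 2^(2*k) * 2) * hv
  · rw [coeff_rescale, Hs, coeff_mk] at hne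
    by_contra hP
    rw [Hcf, if_neg hP] at hne
    simp at hne
end BI

theorem bernoulli_identity (n k : ℕ) (hk : 1 ≤ k) (hkn : k ≤ n) :
    ∑ i ∈ Finset.range ((k + 1) / 2),
        (Nat.choose (2 * k - 2 * i - 1) k : ℚ) * (Nat.choose (2 * n + 1) (2 * i + 1))
          * bernoulli (2 * n - 2 * i)
      = (-1 : ℚ) ^ k * 2 ^ (2 * (k : ℤ) - 2 * n - 1) *
          ∑ i ∈ Finset.range (n - k + 1),
            (Nat.choose (n - i) k : ℚ) * (Nat.choose (2 * n + 1) (2 * i))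
              * (2 ^ (2 * i) - 2) * bernoulli (2 * i) := by
  have hconst : (2 * (k ! : ℚ) / (((2*n+1)! : ℚ) * 2^k)) ≠ 0 := by positivity
  apply mul_left_cancel₀ hconst
  rw [← BI.F1 n k hk hkn, BI.coeff_chain n k hk hkn, BI.F2 n k hk hkn]
  ring
end
end

section
/- Fix an integer m ≥ 1 and work with polynomials in x_1,…,x_m over ℚ. In the ring of formal power series in two variables t and s with coefficients in ℚ[x_1,…,x_m], the identity (∏_{i=1}^{m} (1 − t·x_i)) · (1 + Σ_{n ≥ k ≥ 1} N_{n,k} t^n s^k) = ∏_{i=1}^{m} (1 + (s−1)·t·x_i) holds; equivalently, 1 + Σ_{n ≥ k ≥ 1} N_{n,k} t^n s^k = E((s−1)t)·H(t), where E(u) = ∏_{i=1}^m (1+u·x_i) and H(u) = ∏_{i=1}^m (1−u·x_i)^{-1} are the generating series of the elementary and complete homogeneous symmetric polynomials. -/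
open Finset MvPolynomial

/-- `N m n k` is the sum of all monomial symmetric polynomials in `x_1, …, x_m`
indexed by partitions of `n` of length `k`: the sum of all monomials of total
degree `n` having exactly `k` variables with nonzero exponent. -/
noncomputable def N (m n k : ℕ) : MvPolynomial (Fin m) ℚ :=
  ∑ a ∈ (Finset.Nat.antidiagonalTuple m n).filter
      (fun a => (Finset.univ.filter fun i => a i ≠ 0).card = k),
    MvPolynomial.monomial (Finsupp.equivFunOnFinite.symm a) 1

/-- The generating function `1 + ∑_{n ≥ k ≥ 1} N_{n,k} t^n s^k` as a formal power
series in two variables `t = X 0` and `s = X 1` over `ℚ[x_1, …, x_m]`.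
(Note `N m 0 0 = 1` and `N m n k = 0` unless `n ≥ k ≥ 1` or `n = k = 0`.) -/
noncomputable def Fgen (m : ℕ) : MvPowerSeries (Fin 2) (MvPolynomial (Fin m) ℚ) :=
  fun e => N m (e 0) (e 1)

namespace GFaux

/-- tuples of sum `n`, support of size `k`, supported inside `T`. -/
noncomputable def Sset (m : ℕ) (T : Finset (Fin m)) (n k : ℕ) : Finset (Fin m → ℕ) :=
  (Finset.Nat.antidiagonalTuple m n).filter
    (fun a => (Finset.univ.filter fun i => a i ≠ 0).card = k ∧ ∀ i ∉ T, a i = 0)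

lemma mem_Sset {m : ℕ} {T : Finset (Fin m)} {n k : ℕ} {a : Fin m → ℕ} :
    a ∈ Sset m T n k ↔
      (∑ i, a i) = n ∧ (Finset.univ.filter fun i => a i ≠ 0).card = k ∧ ∀ i ∉ T, a i = 0 := by
  simp [Sset, Finset.Nat.mem_antidiagonalTuple, and_assoc]

/-- the restricted generating polynomial coefficients. -/
noncomputable def g (m : ℕ) (T : Finset (Fin m)) (n k : ℕ) : MvPolynomial (Fin m) ℚ :=
  ∑ a ∈ Sset m T n k, MvPolynomial.monomial (Finsupp.equivFunOnFinite.symm a) 1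

noncomputable def FF (m : ℕ) (T : Finset (Fin m)) :
    MvPowerSeries (Fin 2) (MvPolynomial (Fin m) ℚ) :=
  fun e => g m T (e 0) (e 1)

lemma g_univ (m n k : ℕ) : g m Finset.univ n k = N m n k := by
  unfold g N
  congr 1
  unfold Sset
  apply Finset.filter_congr
  intro a _
  simp

lemma FF_univ (m : ℕ) : FF m Finset.univ = Fgen m := by
  funext e
  simp [FF, Fgen, g_univ]

lemma sum_add_single {m : ℕ} (a : Fin m → ℕ) (j : Fin m) :
    (∑ i, (a + (Pi.single j 1 : Fin m → ℕ)) i) = (∑ i, a i) + 1 := by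
  simp [Finset.sum_add_distrib]

lemma sub_add_single {m : ℕ} {a : Fin m → ℕ} {j : Fin m} (h : a j ≠ 0) :
    a - (Pi.single j 1 : Fin m → ℕ) + (Pi.single j 1 : Fin m → ℕ) = a := by
  funext i
  by_cases hij : i = j
  · subst hij
    simp [Nat.sub_add_cancel (Nat.one_le_iff_ne_zero.mpr h)]
  · simp [Pi.single_apply, hij]

lemma add_sub_single {m : ℕ} (a : Fin m → ℕ) (j : Fin m) :
    a + (Pi.single j 1 : Fin m → ℕ) - (Pi.single j 1 : Fin m → ℕ) = a := by
  funext i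
  by_cases hij : i = j
  · subst hij; simp
  · simp [Pi.single_apply, hij]

lemma sub_single_apply {m : ℕ} (a : Fin m → ℕ) (j i : Fin m) :
    (a - (Pi.single j 1 : Fin m → ℕ)) i = if i = j then a j - 1 else a i := by
  by_cases hij : i = j
  · subst hij; simp
  · simp [Pi.single_apply, hij]

lemma add_single_apply {m : ℕ} (a : Fin m → ℕ) (j i : Fin m) :
    (a + (Pi.single j 1 : Fin m → ℕ)) i = if i = j then a j + 1 else a i := by
  by_cases hij : i = j
  · subst hij; simp
  · simp [Pi.single_apply, hij]

lemma monomial_add_single {m : ℕ} (a : Fin m → ℕ) (j : Fin m) :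
    (MvPolynomial.monomial (Finsupp.equivFunOnFinite.symm (a + (Pi.single j 1 : Fin m → ℕ))) (1 : ℚ))
      = X j * MvPolynomial.monomial (Finsupp.equivFunOnFinite.symm a) 1 := by
  rw [MvPolynomial.X, MvPolynomial.monomial_mul, one_mul]
  have hfe : Finsupp.equivFunOnFinite.symm (a + (Pi.single j 1 : Fin m → ℕ))
      = Finsupp.single j 1 + Finsupp.equivFunOnFinite.symm a := by
    apply Finsupp.ext
    intro i
    by_cases hij : i = j
    · subst hij
      simp [Finsupp.single_apply, add_comm]
    · simp [Finsupp.single_apply, Pi.single_apply, hij, Ne.symm hij]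
  rw [hfe]

/-- For `k = 0`, `Sset` is independent of `T`. -/
lemma Sset_k_zero {m : ℕ} (T T' : Finset (Fin m)) (n : ℕ) :
    Sset m T n 0 = Sset m T' n 0 := by
  ext a
  simp only [mem_Sset, Finset.card_eq_zero, Finset.filter_eq_empty_iff]
  constructor <;> rintro ⟨h1, h2, h3⟩ <;>
    exact ⟨h1, h2, fun i _ => by
      have := h2 (Finset.mem_univ i); simpa using this⟩

/-- For `n = 0`, `Sset` is independent of `T`. -/
lemma Sset_n_zero {m : ℕ} (T T' : Finset (Fin m)) (k : ℕ) :
    Sset m T 0 k = Sset m T' 0 k := by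
  ext a
  simp only [mem_Sset]
  constructor <;> rintro ⟨h1, h2, h3⟩ <;>
    refine ⟨h1, h2, fun i _ => ?_⟩ <;>
    exact (Finset.sum_eq_zero_iff.mp h1) i (Finset.mem_univ i)

lemma Sset_filter_zero {m : ℕ} {T : Finset (Fin m)} {j : Fin m} (hj : j ∉ T) (n k : ℕ) :
    (Sset m (insert j T) n k).filter (fun a => a j = 0) = Sset m T n k := by
  ext a
  simp only [Finset.mem_filter, mem_Sset]
  constructor
  · rintro ⟨⟨h1, h2, h3⟩, h4⟩
    refine ⟨h1, h2, fun i hi => ?_⟩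
    by_cases hij : i = j
    · subst hij; exact h4
    · exact h3 i (by simp [hij, hi])
  · rintro ⟨h1, h2, h3⟩
    exact ⟨⟨h1, h2, fun i hi => h3 i (fun h => hi (Finset.mem_insert_of_mem h))⟩, h3 j hj⟩

lemma bij1 {m : ℕ} {T : Finset (Fin m)} {j : Fin m} (hj : j ∉ T) (n k : ℕ) :
    (∑ a ∈ (Sset m (insert j T) (n + 1) (k + 1)).filter (fun a => a j = 1),
        MvPolynomial.monomial (Finsupp.equivFunOnFinite.symm a) (1 : ℚ))
      = X j * g m T n k := by
  rw [g, Finset.mul_sum]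
  apply Finset.sum_nbij' (i := fun a => a - (Pi.single j 1 : Fin m → ℕ)) (j := fun a => a + (Pi.single j 1 : Fin m → ℕ))
  · intro a ha
    simp only [Finset.mem_filter, mem_Sset] at ha
    obtain ⟨⟨h1, h2, h3⟩, h4⟩ := ha
    have hne : a j ≠ 0 := by omega
    have hsum : (∑ i, (a - (Pi.single j 1 : Fin m → ℕ)) i) + 1 = n + 1 := by
      rw [← sum_add_single, sub_add_single hne, h1]
    refine mem_Sset.mpr ⟨by omega, ?_, ?_⟩
    · have hset : (Finset.univ.filter fun i => (a - (Pi.single j 1 : Fin m → ℕ)) i ≠ 0)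
          = (Finset.univ.filter fun i => a i ≠ 0).erase j := by
        ext i
        by_cases hij : i = j
        · subst hij; simp [sub_single_apply, h4]
        · simp [sub_single_apply, hij]
      rw [hset, Finset.card_erase_of_mem (by simp [hne]), h2]
      omega
    · intro i hi
      rw [sub_single_apply]
      by_cases hij : i = j
      · simp [hij, h4]
      · simp only [if_neg hij]
        exact h3 i (by simp [hij, hi])
  · intro a ha
    rw [mem_Sset] at ha
    obtain ⟨h1, h2, h3⟩ := ha
    have haj : a j = 0 := h3 j hj
    refine Finset.mem_filter.mpr ⟨mem_Sset.mpr ⟨by rw [sum_add_single, h1], ?_, ?_⟩,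
      by simp [add_single_apply, haj]⟩
    · have hset : (Finset.univ.filter fun i => (a + (Pi.single j 1 : Fin m → ℕ)) i ≠ 0)
          = insert j (Finset.univ.filter fun i => a i ≠ 0) := by
        ext i
        by_cases hij : i = j
        · subst hij; simp [add_single_apply]
        · simp [add_single_apply, hij]
      rw [hset, Finset.card_insert_of_notMem (by simp [haj]), h2]
    · intro i hi
      rw [add_single_apply]
      have hij : i ≠ j := fun h => hi (h ▸ Finset.mem_insert_self j T)
      simp only [if_neg hij]
      exact h3 i (fun h => hi (Finset.mem_insert_of_mem h))
  · intro a ha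
    simp only [Finset.mem_filter] at ha
    exact sub_add_single (by omega)
  · intro a _
    exact add_sub_single a j
  · intro a ha
    simp only [Finset.mem_filter] at ha
    conv_lhs => rw [← sub_add_single (show a j ≠ 0 by omega) (j := j)]
    rw [monomial_add_single]

lemma bij2 {m : ℕ} {T : Finset (Fin m)} (j : Fin m) (n k : ℕ) :
    (∑ a ∈ (Sset m (insert j T) (n + 1) k).filter (fun a => 2 ≤ a j),
        MvPolynomial.monomial (Finsupp.equivFunOnFinite.symm a) (1 : ℚ))
      = X j * ∑ a ∈ (Sset m (insert j T) n k).filter (fun a => a j ≠ 0),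
          MvPolynomial.monomial (Finsupp.equivFunOnFinite.symm a) 1 := by
  rw [Finset.mul_sum]
  apply Finset.sum_nbij' (i := fun a => a - (Pi.single j 1 : Fin m → ℕ)) (j := fun a => a + (Pi.single j 1 : Fin m → ℕ))
  · intro a ha
    simp only [Finset.mem_filter, mem_Sset] at ha
    obtain ⟨⟨h1, h2, h3⟩, h4⟩ := ha
    have hne : a j ≠ 0 := by omega
    have hsum : (∑ i, (a - (Pi.single j 1 : Fin m → ℕ)) i) + 1 = n + 1 := by
      rw [← sum_add_single, sub_add_single hne, h1]
    have hset : (Finset.univ.filter fun i => (a - (Pi.single j 1 : Fin m → ℕ)) i ≠ 0)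
        = (Finset.univ.filter fun i => a i ≠ 0) := by
      ext i
      by_cases hij : i = j
      · subst hij; simp [sub_single_apply]; omega
      · simp [sub_single_apply, hij]
    have hsum' : (∑ i, (a - (Pi.single j 1 : Fin m → ℕ)) i) = n := Nat.add_right_cancel hsum
    refine Finset.mem_filter.mpr ⟨mem_Sset.mpr ⟨hsum', by rw [hset, h2], ?_⟩, ?_⟩
    · intro i hi
      rw [sub_single_apply]
      by_cases hij : i = j
      · exact absurd (hij ▸ Finset.mem_insert_self j T) (hij ▸ hi)
      · simp only [if_neg hij]
        exact h3 i hi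
    · rw [sub_single_apply]
      simp only [if_pos rfl, if_true, eq_self_iff_true]
      omega
  · intro a ha
    simp only [Finset.mem_filter, mem_Sset] at ha
    obtain ⟨⟨h1, h2, h3⟩, h4⟩ := ha
    have hset : (Finset.univ.filter fun i => (a + (Pi.single j 1 : Fin m → ℕ)) i ≠ 0)
        = (Finset.univ.filter fun i => a i ≠ 0) := by
      ext i
      by_cases hij : i = j
      · subst hij; simp [add_single_apply]; omega
      · simp [add_single_apply, hij]
    refine Finset.mem_filter.mpr ⟨mem_Sset.mpr ⟨by rw [sum_add_single, h1], by rw [hset, h2], ?_⟩,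
      by rw [add_single_apply]; simp; omega⟩
    intro i hi
    rw [add_single_apply]
    have hij : i ≠ j := fun h => hi (h ▸ Finset.mem_insert_self j T)
    simp only [if_neg hij]
    exact h3 i hi
  · intro a ha
    simp only [Finset.mem_filter] at ha
    exact sub_add_single (by omega)
  · intro a _
    exact add_sub_single a j
  · intro a ha
    simp only [Finset.mem_filter] at ha
    conv_lhs => rw [← sub_add_single (show a j ≠ 0 by omega) (j := j)]
    rw [monomial_add_single]

/-- the key coefficient identity. -/
lemma keyg {m : ℕ} {T : Finset (Fin m)} {j : Fin m} (hj : j ∉ T) (n k : ℕ) :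
    g m (insert j T) n k + (if 1 ≤ n then X j * g m T (n - 1) k else 0)
      = g m T n k + (if 1 ≤ n ∧ 1 ≤ k then X j * g m T (n - 1) (k - 1) else 0)
        + (if 1 ≤ n then X j * g m (insert j T) (n - 1) k else 0) := by
  rcases n with _ | n
  · rw [if_neg (by omega : ¬ (1:ℕ) ≤ 0), if_neg (by omega : ¬ ((1:ℕ) ≤ 0 ∧ 1 ≤ k)),
      if_neg (by omega : ¬ (1:ℕ) ≤ 0), add_zero, add_zero, add_zero]
    unfold g
    rw [Sset_n_zero (insert j T) T]
  · rw [if_pos (by omega : 1 ≤ n + 1), if_pos (by omega : 1 ≤ n + 1), Nat.add_sub_cancel]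
    rcases k with _ | k
    · rw [if_neg (by omega : ¬ ((1:ℕ) ≤ n + 1 ∧ 1 ≤ 0)), add_zero]
      unfold g
      rw [Sset_k_zero (insert j T) T (n + 1), Sset_k_zero (insert j T) T n]
    · rw [if_pos (by omega : (1:ℕ) ≤ n + 1 ∧ 1 ≤ k + 1), Nat.add_sub_cancel]
      -- split sums
      have split : ∀ n' : ℕ, g m (insert j T) n' (k + 1)
          = g m T n' (k + 1) + ∑ a ∈ (Sset m (insert j T) n' (k + 1)).filter
              (fun a => a j ≠ 0),
              MvPolynomial.monomial (Finsupp.equivFunOnFinite.symm a) 1 := by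
        intro n'
        rw [g, ← Finset.sum_filter_add_sum_filter_not (Sset m (insert j T) n' (k + 1))
          (fun a => a j = 0), Sset_filter_zero hj, g]
      have split2 : (∑ a ∈ (Sset m (insert j T) (n + 1) (k + 1)).filter (fun a => a j ≠ 0),
            MvPolynomial.monomial (Finsupp.equivFunOnFinite.symm a) (1:ℚ))
          = (∑ a ∈ (Sset m (insert j T) (n + 1) (k + 1)).filter (fun a => a j = 1),
              MvPolynomial.monomial (Finsupp.equivFunOnFinite.symm a) 1)
            + ∑ a ∈ (Sset m (insert j T) (n + 1) (k + 1)).filter (fun a => 2 ≤ a j),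
              MvPolynomial.monomial (Finsupp.equivFunOnFinite.symm a) 1 := by
        rw [← Finset.sum_filter_add_sum_filter_not
          ((Sset m (insert j T) (n + 1) (k + 1)).filter (fun a => a j ≠ 0)) (fun a => a j = 1),
          Finset.filter_filter, Finset.filter_filter]
        congr 1
        · apply Finset.sum_congr _ (fun _ _ => rfl)
          apply Finset.filter_congr
          intro a _; constructor
          · rintro ⟨_, h⟩; exact h
          · intro h; exact ⟨by omega, h⟩
        · apply Finset.sum_congr _ (fun _ _ => rfl)
          apply Finset.filter_congr
          intro a _; constructor
          · rintro ⟨h1, h2⟩; omega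
          · intro h; constructor <;> omega
      rw [split (n + 1), split n, split2, bij1 hj n k, bij2 j n (k + 1)]
      ring

lemma coeff_single_le_iff {e : Fin 2 →₀ ℕ} : Finsupp.single (0 : Fin 2) 1 ≤ e ↔ 1 ≤ e 0 :=
  Finsupp.single_le_iff

lemma sub_single0_apply0 (e : Fin 2 →₀ ℕ) :
    ((e - Finsupp.single (0 : Fin 2) 1) : Fin 2 →₀ ℕ) 0 = e 0 - 1 := by
  simp [Finsupp.tsub_apply]

lemma sub_single0_apply1 (e : Fin 2 →₀ ℕ) :
    ((e - Finsupp.single (0 : Fin 2) 1) : Fin 2 →₀ ℕ) 1 = e 1 := by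
  rw [Finsupp.tsub_apply, Finsupp.single_eq_of_ne' (by decide : (0 : Fin 2) ≠ 1)]
  rfl

lemma coeff_M0_FF (m : ℕ) (T : Finset (Fin m)) (j : Fin m) (e : Fin 2 →₀ ℕ) :
    MvPowerSeries.coeff e
        (MvPowerSeries.monomial (Finsupp.single (0 : Fin 2) 1) (X j : MvPolynomial (Fin m) ℚ)
          * FF m T)
      = if 1 ≤ e 0 then X j * g m T (e 0 - 1) (e 1) else 0 := by
  rw [MvPowerSeries.coeff_monomial_mul]
  by_cases h : 1 ≤ e 0
  · rw [if_pos (coeff_single_le_iff.mpr h), if_pos h]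
    have : MvPowerSeries.coeff (e - Finsupp.single (0:Fin 2) 1) (FF m T)
        = g m T (e 0 - 1) (e 1) := by
      rw [MvPowerSeries.coeff_apply]
      show g m T (((e - Finsupp.single (0:Fin 2) 1) : Fin 2 →₀ ℕ) 0)
        (((e - Finsupp.single (0:Fin 2) 1) : Fin 2 →₀ ℕ) 1) = _
      rw [sub_single0_apply0, sub_single0_apply1]
    rw [this]
  · rw [if_neg (fun hc => h (coeff_single_le_iff.mp hc)), if_neg h]

lemma le_single_add_iff {e : Fin 2 →₀ ℕ} :
    Finsupp.single (0 : Fin 2) 1 + Finsupp.single (1 : Fin 2) 1 ≤ e ↔ 1 ≤ e 0 ∧ 1 ≤ e 1 := by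
  rw [Finsupp.le_def]
  constructor
  · intro h
    constructor
    · have := h 0; simpa [Finsupp.single_apply] using this
    · have := h 1; simpa [Finsupp.single_apply] using this
  · rintro ⟨h0, h1⟩ i
    fin_cases i <;> simp [Finsupp.single_apply] <;> assumption

lemma coeff_M01_FF (m : ℕ) (T : Finset (Fin m)) (j : Fin m) (e : Fin 2 →₀ ℕ) :
    MvPowerSeries.coeff e
        (MvPowerSeries.monomial (Finsupp.single (0 : Fin 2) 1 + Finsupp.single (1 : Fin 2) 1)
            (X j : MvPolynomial (Fin m) ℚ) * FF m T)
      = if 1 ≤ e 0 ∧ 1 ≤ e 1 then X j * g m T (e 0 - 1) (e 1 - 1) else 0 := by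
  rw [MvPowerSeries.coeff_monomial_mul]
  by_cases h : 1 ≤ e 0 ∧ 1 ≤ e 1
  · rw [if_pos (le_single_add_iff.mpr h), if_pos h]
    have : MvPowerSeries.coeff
          (e - (Finsupp.single (0:Fin 2) 1 + Finsupp.single (1:Fin 2) 1)) (FF m T)
        = g m T (e 0 - 1) (e 1 - 1) := by
      rw [MvPowerSeries.coeff_apply]
      show g m T
          (((e - (Finsupp.single (0:Fin 2) 1 + Finsupp.single (1:Fin 2) 1)) : Fin 2 →₀ ℕ) 0)
          (((e - (Finsupp.single (0:Fin 2) 1 + Finsupp.single (1:Fin 2) 1)) : Fin 2 →₀ ℕ) 1) = _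
      congr 2 <;>
        simp [Finsupp.tsub_apply, Finsupp.add_apply, Finsupp.single_apply,
          Finsupp.single_eq_of_ne']
    rw [this]
  · rw [if_neg (fun hc => h (le_single_add_iff.mp hc)), if_neg h]

lemma keyK {m : ℕ} {T : Finset (Fin m)} {j : Fin m} (hj : j ∉ T) :
    FF m (insert j T)
        + MvPowerSeries.monomial (Finsupp.single (0 : Fin 2) 1)
            (X j : MvPolynomial (Fin m) ℚ) * FF m T
      = FF m T
        + MvPowerSeries.monomial
            (Finsupp.single (0 : Fin 2) 1 + Finsupp.single (1 : Fin 2) 1)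
            (X j : MvPolynomial (Fin m) ℚ) * FF m T
        + MvPowerSeries.monomial (Finsupp.single (0 : Fin 2) 1)
            (X j : MvPolynomial (Fin m) ℚ) * FF m (insert j T) := by
  apply MvPowerSeries.ext
  intro e
  rw [map_add, map_add, map_add, coeff_M0_FF, coeff_M0_FF, coeff_M01_FF]
  rw [MvPowerSeries.coeff_apply, MvPowerSeries.coeff_apply]
  show g m (insert j T) (e 0) (e 1) + _ = g m T (e 0) (e 1) + _ + _
  exact keyg hj (e 0) (e 1)

lemma X0CXj (m : ℕ) (j : Fin m) :
    (MvPowerSeries.X 0 : MvPowerSeries (Fin 2) (MvPolynomial (Fin m) ℚ))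
        * MvPowerSeries.C (σ := Fin 2) (R := MvPolynomial (Fin m) ℚ) (X j)
      = MvPowerSeries.monomial (Finsupp.single (0 : Fin 2) 1) (X j) := by
  rw [MvPowerSeries.X_def, show (MvPowerSeries.C (σ := Fin 2) (R := MvPolynomial (Fin m) ℚ) (X j))
    = MvPowerSeries.monomial 0 (X j) from rfl, MvPowerSeries.monomial_mul_monomial]
  rw [add_zero, one_mul]

lemma X1X0CXj (m : ℕ) (j : Fin m) :
    (MvPowerSeries.X 1 : MvPowerSeries (Fin 2) (MvPolynomial (Fin m) ℚ))
        * (MvPowerSeries.X 0 * MvPowerSeries.C (σ := Fin 2) (R := MvPolynomial (Fin m) ℚ) (X j))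
      = MvPowerSeries.monomial
          (Finsupp.single (0 : Fin 2) 1 + Finsupp.single (1 : Fin 2) 1) (X j) := by
  rw [X0CXj, MvPowerSeries.X_def, MvPowerSeries.monomial_mul_monomial, one_mul, add_comm]

lemma key {m : ℕ} {T : Finset (Fin m)} {j : Fin m} (hj : j ∉ T) :
    (1 - (MvPowerSeries.X 0 : MvPowerSeries (Fin 2) (MvPolynomial (Fin m) ℚ))
          * MvPowerSeries.C (σ := Fin 2) (R := MvPolynomial (Fin m) ℚ) (X j)) * FF m (insert j T)
      = (1 + ((MvPowerSeries.X 1 : MvPowerSeries (Fin 2) (MvPolynomial (Fin m) ℚ)) - 1)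
            * MvPowerSeries.X 0
            * MvPowerSeries.C (σ := Fin 2) (R := MvPolynomial (Fin m) ℚ) (X j)) * FF m T := by
  have h := keyK hj
  rw [← X0CXj, ← X1X0CXj] at h
  linear_combination h

lemma FF_empty (m : ℕ) : FF m ∅ = 1 := by
  apply MvPowerSeries.ext
  intro e
  classical
  rw [MvPowerSeries.coeff_one, MvPowerSeries.coeff_apply]
  show g m ∅ (e 0) (e 1) = _
  by_cases he : e = 0
  · subst he
    simp only [Finsupp.coe_zero, Pi.zero_apply, if_pos rfl]
    unfold g
    have : Sset m ∅ 0 0 = {0} := by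
      ext a
      simp only [mem_Sset, Finset.mem_singleton]
      constructor
      · rintro ⟨h1, h2, h3⟩
        funext i
        exact h3 i (Finset.notMem_empty i)
      · rintro rfl
        simp
    rw [this, Finset.sum_singleton]
    have h0 : (Finsupp.equivFunOnFinite.symm (0 : Fin m → ℕ)) = 0 := by
      ext i; simp
    rw [h0]
    simp [MvPolynomial.monomial_zero']
  · rw [if_neg he]
    have : Sset m ∅ (e 0) (e 1) = ∅ := by
      apply Finset.eq_empty_of_forall_notMem
      intro a ha
      rw [mem_Sset] at ha
      obtain ⟨h1, h2, h3⟩ := ha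
      have ha0 : a = 0 := funext fun i => h3 i (Finset.notMem_empty i)
      subst ha0
      have h00 : e 0 = 0 := by simpa using h1.symm
      have h11 : e 1 = 0 := by rw [← h2]; simp
      apply he
      ext i
      simp only [Finsupp.coe_zero, Pi.zero_apply]
      revert i
      rw [Fin.forall_fin_two]
      exact ⟨h00, h11⟩
    unfold g
    rw [this, Finset.sum_empty]

lemma main (m : ℕ) (T : Finset (Fin m)) :
    (∏ i ∈ T,
        (1 - (MvPowerSeries.X 0 : MvPowerSeries (Fin 2) (MvPolynomial (Fin m) ℚ))
            * MvPowerSeries.C (σ := Fin 2) (R := MvPolynomial (Fin m) ℚ) (MvPolynomial.X i)))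
        * FF m T
      = ∏ i ∈ T,
          (1 + ((MvPowerSeries.X 1 : MvPowerSeries (Fin 2) (MvPolynomial (Fin m) ℚ)) - 1)
              * MvPowerSeries.X 0
              * MvPowerSeries.C (σ := Fin 2) (R := MvPolynomial (Fin m) ℚ) (MvPolynomial.X i)) := by
  induction T using Finset.induction_on with
  | empty => simp [FF_empty]
  | @insert j T hj ih =>
    rw [Finset.prod_insert hj, Finset.prod_insert hj]
    calc ((1 - MvPowerSeries.X 0 * MvPowerSeries.C (σ := Fin 2) (R := MvPolynomial (Fin m) ℚ)
              (MvPolynomial.X j)) * ∏ i ∈ T, (1 - MvPowerSeries.X 0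
                * MvPowerSeries.C (σ := Fin 2) (R := MvPolynomial (Fin m) ℚ) (MvPolynomial.X i)))
          * FF m (insert j T)
        = (∏ i ∈ T, (1 - MvPowerSeries.X 0
              * MvPowerSeries.C (σ := Fin 2) (R := MvPolynomial (Fin m) ℚ) (MvPolynomial.X i)))
            * ((1 - MvPowerSeries.X 0 * MvPowerSeries.C (σ := Fin 2) (R := MvPolynomial (Fin m) ℚ)
              (MvPolynomial.X j)) * FF m (insert j T)) := by ring
      _ = (∏ i ∈ T, (1 - MvPowerSeries.X 0
              * MvPowerSeries.C (σ := Fin 2) (R := MvPolynomial (Fin m) ℚ) (MvPolynomial.X i)))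
            * ((1 + (MvPowerSeries.X 1 - 1) * MvPowerSeries.X 0
              * MvPowerSeries.C (σ := Fin 2) (R := MvPolynomial (Fin m) ℚ) (MvPolynomial.X j))
              * FF m T) := by rw [key hj]
      _ = (1 + (MvPowerSeries.X 1 - 1) * MvPowerSeries.X 0
              * MvPowerSeries.C (σ := Fin 2) (R := MvPolynomial (Fin m) ℚ) (MvPolynomial.X j))
            * ((∏ i ∈ T, (1 - MvPowerSeries.X 0
              * MvPowerSeries.C (σ := Fin 2) (R := MvPolynomial (Fin m) ℚ) (MvPolynomial.X i)))
              * FF m T) := by ring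
      _ = _ := by rw [ih]

end GFaux

theorem generating_function_eq (m : ℕ) (hm : 1 ≤ m) :
    (∏ i : Fin m,
        (1 - (MvPowerSeries.X 0 : MvPowerSeries (Fin 2) (MvPolynomial (Fin m) ℚ))
            * MvPowerSeries.C (σ := Fin 2) (R := MvPolynomial (Fin m) ℚ) (MvPolynomial.X i)))
        * Fgen m
      = ∏ i : Fin m,
          (1 + ((MvPowerSeries.X 1 : MvPowerSeries (Fin 2) (MvPolynomial (Fin m) ℚ)) - 1)
              * MvPowerSeries.X 0
              * MvPowerSeries.C (σ := Fin 2) (R := MvPolynomial (Fin m) ℚ) (MvPolynomial.X i)) := by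
  rw [← GFaux.FF_univ]
  exact GFaux.main m Finset.univ
end

section
/- Fix an integer m ≥ 1 and work in ℚ[x_1,…,x_m]. For all integers n, k with 1 ≤ k and n ≥ k+1, the identity p_1·N_{n-1,k} + p_2·N_{n-2,k} + ⋯ + p_{n-k}·N_{k,k} = (n-k)·N_{n,k} + (k+1)·N_{n,k+1} holds, where p_j = x_1^j + ⋯ + x_m^j is the j-th power-sum symmetric polynomial. -/
open Finset MvPolynomial

lemma coeff_N (m n k : ℕ) (d : Fin m →₀ ℕ) :
    coeff d (N m n k)
      = if (∑ i, d i) = n ∧ (Finset.univ.filter fun i => d i ≠ 0).card = k then 1 else 0 := by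
  unfold N
  rw [coeff_sum]
  simp only [coeff_monomial, Equiv.symm_apply_eq]
  rw [Finset.sum_ite_eq' ]
  simp [Finset.Nat.mem_antidiagonalTuple, and_comm]

lemma add_eq_iff {m : ℕ} (u v d : Fin m →₀ ℕ) : u + v = d ↔ u ≤ d ∧ v = d - u := by
  constructor
  · rintro rfl
    exact ⟨le_add_right le_rfl, by rw [add_tsub_cancel_left]⟩
  · rintro ⟨h, rfl⟩
    exact add_tsub_cancel_of_le h

lemma sum_ite_and' {α : Type*} [DecidableEq α] (s : Finset α) (P : Prop) [Decidable P] (c : α) :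
    (∑ a ∈ s, if P ∧ a = c then (1:ℚ) else 0) = if P ∧ c ∈ s then 1 else 0 := by
  by_cases hP : P <;> simp [hP, Finset.sum_ite_eq' s c fun _ => (1:ℚ)]

lemma coeff_psum_mul (m j n' k : ℕ) (d : Fin m →₀ ℕ) :
    coeff d (psum (Fin m) ℚ j * N m n' k)
      = ∑ i : Fin m, if j ≤ d i ∧ (∑ t, (d t - if i = t then j else 0)) = n'
          ∧ (Finset.univ.filter fun t => (d t - if i = t then j else 0) ≠ 0).card = k
          then 1 else 0 := by
  unfold N psum
  rw [Finset.sum_mul]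
  simp only [Finset.mul_sum, X_pow_eq_monomial, monomial_mul, one_mul]
  rw [coeff_sum]
  refine Finset.sum_congr rfl fun i _ => ?_
  rw [coeff_sum]
  simp only [coeff_monomial, add_eq_iff, Equiv.symm_apply_eq]
  rw [sum_ite_and']
  simp [Finset.Nat.mem_antidiagonalTuple, Finsupp.single_le_iff, Finsupp.tsub_apply,
    Finsupp.single_apply, and_assoc]

lemma supp_A {m : ℕ} (d : Fin m →₀ ℕ) (i : Fin m) (j : ℕ) (h1 : 1 ≤ j) (h2 : j ≤ d i) :
    (Finset.univ.filter fun t => (d t - if i = t then j else 0) ≠ 0)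
      = if j = d i then (Finset.univ.filter fun t : Fin m => d t ≠ 0).erase i
        else Finset.univ.filter fun t => d t ≠ 0 := by
  split_ifs with hj
  · ext t; by_cases ht : i = t
    · subst ht; simp [hj]
    · simp [if_neg ht, Finset.mem_erase]; exact fun _ h => ht h.symm
  · ext t; by_cases ht : i = t
    · subst ht; simp; omega
    · simp [if_neg ht]

lemma sum_A {m : ℕ} (d : Fin m →₀ ℕ) (i : Fin m) (j : ℕ) (h2 : j ≤ d i) :
    (∑ t, (d t - if i = t then j else 0)) + j = ∑ t, d t := by
  have h : ∀ t, (d t - if i = t then j else 0) + (if i = t then j else 0) = d t := by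
    intro t; split_ifs with ht
    · subst ht; omega
    · omega
  calc (∑ t, (d t - if i = t then j else 0)) + j
      = (∑ t, (d t - if i = t then j else 0)) + ∑ t, (if i = t then j else 0) := by
        rw [Finset.sum_ite_eq Finset.univ i (fun _ => j)]; simp
    _ = ∑ t, d t := by rw [← Finset.sum_add_distrib]; exact Finset.sum_congr rfl fun t _ => h t

lemma bound_A {m : ℕ} (d : Fin m →₀ ℕ) (i : Fin m) (hi : d i ≠ 0) :
    d i + ((Finset.univ.filter fun t : Fin m => d t ≠ 0).card - 1) ≤ ∑ t, d t := by
  set S := Finset.univ.filter fun t : Fin m => d t ≠ 0 with hS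
  have hiS : i ∈ S := by simp [hS, hi]
  have h1 : ∑ t ∈ S, d t = ∑ t, d t := by
    apply Finset.sum_filter_of_ne; intro t _ h; simpa using fun h0 => h (by simp [h0])
  have h2 : ∑ t ∈ S, d t = d i + ∑ t ∈ S.erase i, d t := (Finset.add_sum_erase S _ hiS).symm
  have h3 : (S.erase i).card ≤ ∑ t ∈ S.erase i, d t := by
    rw [Finset.card_eq_sum_ones]
    apply Finset.sum_le_sum; intro t ht
    have : t ∈ S := Finset.mem_of_mem_erase ht
    simp only [hS, Finset.mem_filter] at this; omega
  rw [Finset.card_erase_of_mem hiS] at h3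
  omega

lemma sum_pred {m : ℕ} (d : Fin m →₀ ℕ) :
    (∑ i, (d i - 1)) + (Finset.univ.filter fun t : Fin m => d t ≠ 0).card = ∑ i, d i := by
  set S := Finset.univ.filter fun t : Fin m => d t ≠ 0 with hS
  have h0 : ∑ i, (d i - 1) = ∑ i ∈ S, (d i - 1) := by
    symm; apply Finset.sum_subset (Finset.subset_univ S)
    intro t _ ht; simp [hS] at ht; omega
  have h1 : ∑ t ∈ S, d t = ∑ t, d t := by
    apply Finset.sum_filter_of_ne; intro t _ h; simpa using fun h0 => h (by simp [h0])
  rw [h0, ← h1, Finset.card_eq_sum_ones, ← Finset.sum_add_distrib]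
  apply Finset.sum_congr rfl; intro t ht; simp [hS] at ht; omega

theorem N_recurrence (m : ℕ) (hm : 1 ≤ m) (n k : ℕ) (hk : 1 ≤ k) (hn : k + 1 ≤ n) :
    ∑ j ∈ Finset.Icc 1 (n - k), MvPolynomial.psum (Fin m) ℚ j * N m (n - j) k
      = MvPolynomial.C ((n : ℚ) - k) * N m n k
        + MvPolynomial.C ((k : ℚ) + 1) * N m n (k + 1) := by
  ext d
  rw [coeff_sum, coeff_add, coeff_C_mul, coeff_C_mul, coeff_N, coeff_N]
  simp only [coeff_psum_mul]
  set c := (Finset.univ.filter fun i : Fin m => d i ≠ 0).card with hc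
  by_cases hs : (∑ i, d i) = n
  · -- main case
    simp only [hs, true_and]
    have hcong : ∀ j ∈ Finset.Icc 1 (n - k), ∀ i : Fin m,
        (if j ≤ d i ∧ (∑ t, (d t - if i = t then j else 0)) = n - j
            ∧ (Finset.univ.filter fun t => (d t - if i = t then j else 0) ≠ 0).card = k
          then (1:ℚ) else 0)
        = if j ≤ d i ∧ (Finset.univ.filter fun t => (d t - if i = t then j else 0) ≠ 0).card = k
          then 1 else 0 := by
      intro j hj i
      refine if_congr ⟨fun ⟨h1, _, h3⟩ => ⟨h1, h3⟩, fun ⟨h1, h3⟩ => ⟨h1, ?_, h3⟩⟩ rfl rfl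
      have := sum_A d i j h1
      have := Finset.mem_Icc.mp hj
      omega
    rw [Finset.sum_congr rfl fun j hj => Finset.sum_congr rfl fun i _ => hcong j hj i,
      Finset.sum_comm]
    by_cases hck : c = k
    · -- support of d has exactly k elements
      have hinner : ∀ i : Fin m,
          (∑ j ∈ Finset.Icc 1 (n - k),
            if j ≤ d i ∧ (Finset.univ.filter fun t => (d t - if i = t then j else 0) ≠ 0).card = k
            then (1:ℚ) else 0) = ((d i - 1 : ℕ) : ℚ) := by
        intro i
        rw [Finset.sum_boole]
        have hfilter : (Finset.Icc 1 (n - k)).filter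
            (fun j => j ≤ d i ∧
              (Finset.univ.filter fun t => (d t - if i = t then j else 0) ≠ 0).card = k)
            = Finset.Icc 1 (d i - 1) := by
          ext j
          simp only [Finset.mem_filter, Finset.mem_Icc]
          constructor
          · rintro ⟨⟨hj1, hj2⟩, hji, hsc⟩
            rw [supp_A d i j hj1 hji] at hsc
            by_cases hje : j = d i
            · exfalso
              rw [if_pos hje] at hsc
              have hiS : i ∈ Finset.univ.filter fun t : Fin m => d t ≠ 0 := by
                simp; omega
              rw [Finset.card_erase_of_mem hiS] at hsc
              omega
            · omega
          · rintro ⟨hj1, hj2⟩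
            have hdi : d i ≠ 0 := by omega
            have hb := bound_A d i hdi
            have hji : j ≤ d i := by omega
            have hne : j ≠ d i := by omega
            refine ⟨⟨hj1, by omega⟩, hji, ?_⟩
            rw [supp_A d i j hj1 hji, if_neg hne, ← hc]
            exact hck
        rw [hfilter, Nat.card_Icc]
        norm_num
      rw [Finset.sum_congr rfl fun i _ => hinner i]
      rw [← Nat.cast_sum]
      have hsp := sum_pred d
      rw [← hc, hck, hs] at hsp
      have : (∑ i, (d i - 1)) = n - k := by omega
      rw [this, if_pos hck, if_neg (by omega)]
      push_cast [Nat.cast_sub (by omega : k ≤ n)]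
      ring
    · by_cases hck1 : c = k + 1
      · have hinner : ∀ i : Fin m,
            (∑ j ∈ Finset.Icc 1 (n - k),
              if j ≤ d i ∧ (Finset.univ.filter fun t => (d t - if i = t then j else 0) ≠ 0).card = k
              then (1:ℚ) else 0) = if d i ≠ 0 then 1 else 0 := by
          intro i
          rw [Finset.sum_boole]
          have hfilter : (Finset.Icc 1 (n - k)).filter
              (fun j => j ≤ d i ∧
                (Finset.univ.filter fun t => (d t - if i = t then j else 0) ≠ 0).card = k)
              = if d i = 0 then ∅ else {d i} := by
            split_ifs with hdi
            · ext j
              simp only [Finset.mem_filter, Finset.mem_Icc, Finset.notMem_empty, iff_false]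
              rintro ⟨_, hji, _⟩; omega
            · have hb := bound_A d i hdi
              rw [← hc, hck1] at hb
              ext j
              simp only [Finset.mem_filter, Finset.mem_Icc, Finset.mem_singleton]
              constructor
              · rintro ⟨⟨hj1, hj2⟩, hji, hsc⟩
                by_contra hje
                rw [supp_A d i j hj1 hji, if_neg hje, ← hc] at hsc
                omega
              · rintro rfl
                have hj1 : 1 ≤ d i := by omega
                refine ⟨⟨hj1, by omega⟩, le_rfl, ?_⟩
                rw [supp_A d i (d i) hj1 le_rfl, if_pos rfl]
                have hiS : i ∈ Finset.univ.filter fun t : Fin m => d t ≠ 0 := by simp [hdi]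
                rw [Finset.card_erase_of_mem hiS, ← hc, hck1]
                omega
          rw [hfilter]
          split_ifs with hdi h2 <;> simp_all
        rw [Finset.sum_congr rfl fun i _ => hinner i]
        have : (∑ i : Fin m, if d i ≠ 0 then (1:ℚ) else 0) = (c : ℚ) := by
          rw [Finset.sum_boole, hc]
        rw [this, hck1, if_neg (by omega), if_pos rfl]
        push_cast
        ring
      · -- c ∉ {k, k+1} : everything vanishes
        rw [if_neg hck, if_neg hck1]
        rw [Finset.sum_eq_zero, mul_zero, mul_zero, add_zero]
        intro i _
        apply Finset.sum_eq_zero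
        intro j hj
        rw [if_neg]
        rintro ⟨hji, hsc⟩
        have hj1 : 1 ≤ j := (Finset.mem_Icc.mp hj).1
        rw [supp_A d i j hj1 hji] at hsc
        by_cases hje : j = d i
        · rw [if_pos hje] at hsc
          have hiS : i ∈ Finset.univ.filter fun t : Fin m => d t ≠ 0 := by simp; omega
          rw [Finset.card_erase_of_mem hiS, ← hc] at hsc
          have hc1 : 1 ≤ c := by
            rw [hc]; exact Finset.card_pos.mpr ⟨i, hiS⟩
          omega
        · rw [if_neg hje, ← hc] at hsc
          exact hck hsc
  · -- sum of d is not n : both sides vanish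
    rw [if_neg (by tauto), if_neg (by tauto), mul_zero, mul_zero, add_zero]
    apply Finset.sum_eq_zero
    intro j hj
    apply Finset.sum_eq_zero
    intro i _
    rw [if_neg]
    rintro ⟨h1, h2, _⟩
    have := sum_A d i j h1
    have := Finset.mem_Icc.mp hj
    omega
end

section
/- Fix an integer m ≥ 1 and work in ℚ[x_1,…,x_m]. For all integers k ≥ 1 and r ≥ 0, the identity N_{k+r,k} = Σ_{i=0}^{r} (-1)^i · C(k+i,i) · h_{r-i} · e_{k+i} holds, where e_j is the j-th elementary symmetric polynomial, h_j is the j-th complete homogeneous symmetric polynomial (with e_0 = h_0 = 1 and e_j = 0 for j > m), and C(a,b) denotes the binomial coefficient. -/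
open Finset MvPolynomial

variable {σ : Type*} [Fintype σ] [DecidableEq σ]

lemma degree_eq_sum_univ (μ : σ →₀ ℕ) : μ.degree = ∑ i, μ i := by
  rw [Finsupp.degree]
  exact Finset.sum_subset (Finset.subset_univ _)
    (fun i _ h => Finsupp.notMem_support_iff.mp h)

lemma degree_add' (f g : σ →₀ ℕ) : (f + g).degree = f.degree + g.degree := by
  simp [degree_eq_sum_univ, Finset.sum_add_distrib]

lemma degree_toFinsupp (t : Multiset σ) :
    (Multiset.toFinsupp t).degree = Multiset.card t := by
  rw [Finsupp.degree_apply, Multiset.toFinsupp_support]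
  simp only [Multiset.toFinsupp_apply]
  exact Multiset.toFinset_sum_count_eq t

lemma card_support_le_degree (μ : σ →₀ ℕ) : μ.support.card ≤ μ.degree := by
  rw [Finsupp.degree]
  calc μ.support.card = ∑ _i ∈ μ.support, 1 := by simp
  _ ≤ ∑ i ∈ μ.support, μ i :=
    Finset.sum_le_sum fun i hi => Nat.one_le_iff_ne_zero.mpr (Finsupp.mem_support_iff.mp hi)

lemma multiset_prod_X (t : Multiset σ) :
    (t.map (X : σ → MvPolynomial σ ℚ)).prod = monomial (Multiset.toFinsupp t) 1 := by
  induction t using Multiset.induction with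
  | empty => simp [monomial_zero']
  | cons a s ih =>
      rw [Multiset.map_cons, Multiset.prod_cons, ih, X, monomial_mul, one_mul,
        show a ::ₘ s = {a} + s from (Multiset.singleton_add a s).symm,
        Multiset.toFinsupp_add, Multiset.toFinsupp_singleton]

lemma coeff_hsymm' (n : ℕ) (μ : σ →₀ ℕ) :
    coeff μ (hsymm σ ℚ n) = if μ.degree = n then 1 else 0 := by
  rw [hsymm, coeff_sum]
  simp_rw [multiset_prod_X, coeff_monomial]
  by_cases h : μ.degree = n
  · rw [if_pos h]
    have hcard : Multiset.card (Finsupp.toMultiset μ) = n := by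
      rw [Finsupp.card_toMultiset]; rw [← h]; rfl
    have huniq : ∀ (s : Sym σ n), s ≠ ⟨Finsupp.toMultiset μ, hcard⟩ →
        (if Multiset.toFinsupp (s : Multiset σ) = μ then (1 : ℚ) else 0) = 0 := by
      intro s hs
      refine if_neg fun hμ => hs (Subtype.ext ?_)
      show s.1 = Finsupp.toMultiset μ
      rw [← hμ, Multiset.toFinsupp_toMultiset]
      rfl
    exact (Fintype.sum_eq_single _ huniq).trans
      (if_pos (Finsupp.toMultiset_toFinsupp μ))
  · rw [if_neg h]
    apply Finset.sum_eq_zero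
    intro s _
    refine if_neg fun hμ => h ?_
    rw [← hμ, degree_toFinsupp, s.2]

lemma indicator_apply (T : Finset σ) (j : σ) :
    (∑ i ∈ T, Finsupp.single i 1 : σ →₀ ℕ) j = if j ∈ T then 1 else 0 := by
  rw [Finset.sum_apply']
  simp [Finsupp.single_apply]

lemma indicator_le_iff (T : Finset σ) (μ : σ →₀ ℕ) :
    (∑ i ∈ T, Finsupp.single i 1 : σ →₀ ℕ) ≤ μ ↔ T ⊆ μ.support := by
  rw [Finsupp.le_def]
  constructor
  · intro h j hj
    have := h j
    rw [indicator_apply, if_pos hj] at this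
    exact Finsupp.mem_support_iff.mpr (by omega)
  · intro h j
    rw [indicator_apply]
    split
    · exact Nat.one_le_iff_ne_zero.mpr (Finsupp.mem_support_iff.mp (h ‹_›))
    · exact Nat.zero_le _

lemma degree_indicator (T : Finset σ) :
    (∑ i ∈ T, Finsupp.single i 1 : σ →₀ ℕ).degree = T.card := by
  rw [degree_eq_sum_univ]
  simp_rw [indicator_apply]
  simp

lemma coeff_hsymm_mul_esymm (a b : ℕ) (μ : σ →₀ ℕ) :
    coeff μ (hsymm σ ℚ a * esymm σ ℚ b)
      = if μ.degree = a + b then (μ.support.card.choose b : ℚ) else 0 := by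
  rw [esymm_eq_sum_monomial, Finset.mul_sum, coeff_sum]
  simp_rw [coeff_mul_monomial', coeff_hsymm', mul_one]
  have key : ∀ T ∈ powersetCard b Finset.univ,
      (if (∑ i ∈ T, Finsupp.single i 1 : σ →₀ ℕ) ≤ μ then
        (if (μ - ∑ i ∈ T, Finsupp.single i 1).degree = a then (1:ℚ) else 0) else 0)
      = if T ⊆ μ.support ∧ μ.degree = a + b then 1 else 0 := by
    intro T hT
    have hTcard : T.card = b := (Finset.mem_powersetCard.mp hT).2
    by_cases hle : (∑ i ∈ T, Finsupp.single i 1 : σ →₀ ℕ) ≤ μ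
    · rw [if_pos hle]
      have hdeg : μ.degree = (μ - ∑ i ∈ T, Finsupp.single i 1).degree + b := by
        conv_lhs => rw [← tsub_add_cancel_of_le hle]
        rw [degree_add', degree_indicator, hTcard]
      have hsub : T ⊆ μ.support := (indicator_le_iff T μ).mp hle
      by_cases hd : (μ - ∑ i ∈ T, Finsupp.single i 1).degree = a
      · rw [if_pos hd, if_pos ⟨hsub, by omega⟩]
      · rw [if_neg hd, if_neg (by rintro ⟨-, h⟩; omega)]
    · rw [if_neg hle, if_neg (fun h => hle ((indicator_le_iff T μ).mpr h.1))]
  rw [Finset.sum_congr rfl key]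
  by_cases hdeg : μ.degree = a + b
  · rw [if_pos hdeg]
    simp_rw [hdeg, and_true]
    rw [Finset.sum_ite, Finset.sum_const, Finset.sum_const]
    have : Finset.filter (fun T => T ⊆ μ.support) (powersetCard b Finset.univ)
        = powersetCard b μ.support := by
      ext T
      simp [Finset.mem_powersetCard, Finset.mem_filter, Finset.subset_univ, and_comm]
    rw [this, Finset.card_powersetCard]
    simp
  · rw [if_neg hdeg]
    apply Finset.sum_eq_zero
    intro T _
    rw [if_neg (by rintro ⟨-, h⟩; exact hdeg h)]

lemma alt_sum_choose (d r : ℕ) (hd : d ≤ r) :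
    ∑ i ∈ Finset.range (r + 1), (-1 : ℚ) ^ i * (d.choose i : ℚ)
      = if d = 0 then 1 else 0 := by
  have hsub : Finset.range (d + 1) ⊆ Finset.range (r + 1) := by
    intro x hx; simp only [Finset.mem_range] at *; omega
  rw [← Finset.sum_subset hsub (fun x _ hx => by
    rw [Nat.choose_eq_zero_of_lt (by simp only [Finset.mem_range] at hx ⊢; omega)]
    simp)]
  have := Int.alternating_sum_range_choose (n := d)
  calc ∑ i ∈ Finset.range (d + 1), (-1 : ℚ) ^ i * (d.choose i : ℚ)
      = ((∑ i ∈ Finset.range (d + 1), (-1 : ℤ) ^ i * (d.choose i : ℤ) : ℤ) : ℚ) := by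
        push_cast
        rfl
    _ = if d = 0 then 1 else 0 := by rw [this]; split <;> simp

lemma alt_sum (k r s : ℕ) (hk : 1 ≤ k) (hs : s ≤ k + r) :
    ∑ i ∈ Finset.range (r + 1),
        (-1 : ℚ) ^ i * ((k + i).choose i : ℚ) * (s.choose (k + i) : ℚ)
      = if s = k then 1 else 0 := by
  by_cases hsk : s < k
  · rw [if_neg (by omega)]
    apply Finset.sum_eq_zero
    intro i _
    rw [Nat.choose_eq_zero_of_lt (show s < k + i by omega)]
    simp
  · push_neg at hsk
    obtain ⟨d, rfl⟩ := Nat.exists_eq_add_of_le hsk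
    have hkey : ∀ i, ((k + i).choose i : ℚ) * ((k + d).choose (k + i) : ℚ)
        = ((k + d).choose k : ℚ) * (d.choose i : ℚ) := by
      intro i
      by_cases hi : i ≤ d
      · have h1 := Nat.choose_mul (n := k + d) (k := k + i) (s := k)
          (by omega)
        have h2 : (k + i).choose i = (k + i).choose k := by
          rw [← Nat.choose_symm (by omega : k ≤ k + i)]
          congr 1; omega
        have h3 : k + d - k = d := by omega
        have h4 : k + i - k = i := by omega
        rw [h3, h4] at h1
        rw [h2, mul_comm]
        exact_mod_cast congrArg (Nat.cast (R := ℚ)) h1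
      · rw [Nat.choose_eq_zero_of_lt (by omega : k + d < k + i),
          Nat.choose_eq_zero_of_lt (by omega : d < i)]
        simp
    calc ∑ i ∈ Finset.range (r + 1),
          (-1 : ℚ) ^ i * ((k + i).choose i : ℚ) * ((k + d).choose (k + i) : ℚ)
        = ((k + d).choose k : ℚ) * ∑ i ∈ Finset.range (r + 1),
            (-1 : ℚ) ^ i * (d.choose i : ℚ) := by
          rw [Finset.mul_sum]
          apply Finset.sum_congr rfl
          intro i _
          rw [mul_assoc, hkey i]; ring
      _ = if k + d = k then 1 else 0 := by
          rw [alt_sum_choose d r (by omega)]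
          by_cases hd : d = 0
          · subst hd; simp
          · rw [if_neg hd, if_neg (by omega)]; ring

lemma support_card_eq (μ : Fin m →₀ ℕ) :
    (Finset.univ.filter fun i => μ i ≠ 0).card = μ.support.card := by
  congr 1
  ext i
  simp [Finsupp.mem_support_iff]

lemma coeff_N_s10 (m n k : ℕ) (μ : Fin m →₀ ℕ) :
    coeff μ (N m n k) = if μ.degree = n ∧ μ.support.card = k then 1 else 0 := by
  rw [N, coeff_sum]
  simp_rw [coeff_monomial]
  by_cases h : μ.degree = n ∧ μ.support.card = k
  · rw [if_pos h]
    rw [Finset.sum_eq_single (⇑μ)]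
    · rw [if_pos (Finsupp.equivFunOnFinite_symm_coe μ)]
    · intro a _ ha
      refine if_neg fun hμ => ha ?_
      have : a = Finsupp.equivFunOnFinite μ := (Equiv.symm_apply_eq _).mp hμ
      rw [this]; rfl
    · intro hmem
      exfalso; apply hmem
      rw [Finset.mem_filter]
      refine ⟨?_, by rw [support_card_eq]; exact h.2⟩
      rw [Finset.Nat.mem_antidiagonalTuple]
      rw [← h.1, degree_eq_sum_univ]
  · rw [if_neg h]
    apply Finset.sum_eq_zero
    intro a ha
    refine if_neg fun hμ => h ?_
    rw [Finset.mem_filter, Finset.Nat.mem_antidiagonalTuple] at ha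
    have hcoe : ⇑μ = a := by rw [← hμ]; rfl
    constructor
    · rw [degree_eq_sum_univ]
      simp_rw [hcoe]
      exact ha.1
    · rw [← support_card_eq]
      simp_rw [hcoe]
      exact ha.2

theorem N_eq_sum_hsymm_esymm (m : ℕ) (hm : 1 ≤ m) (k r : ℕ) (hk : 1 ≤ k) :
    N m (k + r) k
      = ∑ i ∈ Finset.range (r + 1),
          MvPolynomial.C ((-1 : ℚ) ^ i * (Nat.choose (k + i) i))
            * MvPolynomial.hsymm (Fin m) ℚ (r - i) * MvPolynomial.esymm (Fin m) ℚ (k + i) := by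
  apply MvPolynomial.ext
  intro μ
  rw [coeff_N_s10, coeff_sum]
  simp_rw [mul_assoc, coeff_C_mul, coeff_hsymm_mul_esymm]
  have hterm : ∀ i ∈ Finset.range (r + 1),
      (-1 : ℚ) ^ i * ((k + i).choose i : ℚ) *
        (if μ.degree = (r - i) + (k + i) then (μ.support.card.choose (k + i) : ℚ) else 0)
      = ((-1 : ℚ) ^ i * ((k + i).choose i : ℚ) * (μ.support.card.choose (k + i) : ℚ)) *
          (if μ.degree = k + r then 1 else 0) := by
    intro i hi
    have hik : (r - i) + (k + i) = k + r := by
      simp only [Finset.mem_range] at hi; omega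
    rw [hik]
    split <;> ring
  rw [Finset.sum_congr rfl hterm]
  by_cases hdeg : μ.degree = k + r
  · rw [if_pos hdeg]
    simp_rw [mul_one]
    have hs : μ.support.card ≤ k + r := hdeg ▸ card_support_le_degree μ
    rw [alt_sum k r μ.support.card hk hs]
    by_cases hcard : μ.support.card = k
    · rw [if_pos hcard, if_pos ⟨hdeg, hcard⟩]
    · rw [if_neg hcard, if_neg (by rintro ⟨-, h⟩; exact hcard h)]
  · rw [if_neg hdeg]
    simp_rw [mul_zero]
    rw [if_neg (by rintro ⟨h, -⟩; exact hdeg h), Finset.sum_const_zero]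
end

section
/- For every integer n ≥ 2, E(2n,2) = (3/4)·ζ(2n); that is, the sum of all double zeta values ζ(2a,2b) with a,b ≥ 1 and a+b = n equals three quarters of ζ(2n). -/
open Finset Real

/-- The multiple zeta value `ζ(a 0, a 1, …, a (k-1)) = ∑_{n_1 > n_2 > ⋯ > n_k ≥ 1} ∏ 1/n_i^{a i}`. -/
noncomputable def mzv {k : ℕ} (a : Fin k → ℕ) : ℝ :=
  ∑' n : {f : Fin k → ℕ // StrictAnti f ∧ ∀ i, 0 < f i},
    ∏ i, 1 / ((n.1 i : ℝ) ^ (a i))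

/-- `E n k` is the sum of all multiple zeta values of even arguments with weight `2n`
and depth `k`, i.e. the paper's `E(2n, k)`. -/
noncomputable def E (n k : ℕ) : ℝ :=
  ∑ a ∈ (Finset.Nat.antidiagonalTuple k n).filter (fun a => ∀ i, 0 < a i),
    mzv (fun i => 2 * a i)

/-- The Riemann zeta function at a natural number argument `s ≥ 2`. -/
noncomputable def rzeta (s : ℕ) : ℝ := ∑' m : ℕ, 1 / ((m : ℝ) + 1) ^ s

/- ### Auxiliary definitions -/

/-- Harmonic number `H c = ∑_{t=1}^c 1/t`. -/
private noncomputable def Hsum (c : ℕ) : ℝ := ∑ t ∈ Finset.range c, 1 / ((t : ℝ) + 1)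

private noncomputable def auxF (l : ℕ) (p : ℕ × ℕ) : ℝ :=
  ∑ i ∈ Finset.Ioo 0 (l + 2),
    1 / ((p.1 : ℝ) + (p.2 : ℝ) + 2) ^ (2 * i) * (1 / ((p.1 : ℝ) + 1) ^ (2 * (l + 2 - i)))

private noncomputable def auxA (l : ℕ) (p : ℕ × ℕ) : ℝ :=
  1 / (((p.1 : ℝ) + 1) ^ (2 * l + 2) * (((p.2 : ℝ) + 1) * ((p.2 : ℝ) + 2 * (p.1 : ℝ) + 3)))

private noncomputable def auxB (l : ℕ) (p : ℕ × ℕ) : ℝ :=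
  1 / (((p.1 : ℝ) + (p.2 : ℝ) + 2) ^ (2 * l + 2) *
    (((p.2 : ℝ) + 1) * ((p.2 : ℝ) + 2 * (p.1 : ℝ) + 3)))

private noncomputable def auxBind (l : ℕ) (q : ℕ × ℕ) : ℝ :=
  if q.2 < q.1 then
    1 / (((q.1 : ℝ) + 1) ^ (2 * l + 2) * (((q.1 : ℝ) + 1) ^ 2 - ((q.2 : ℝ) + 1) ^ 2))
  else 0

private noncomputable def auxBase (p : ℕ × ℕ) : ℝ :=
  1 / ((p.1 : ℝ) + 1) ^ 2 * (1 / ((p.2 : ℝ) + 1) ^ 2)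

private noncomputable def auxG (a : Fin 2 → ℕ) (p : ℕ × ℕ) : ℝ :=
  1 / ((p.1 : ℝ) + (p.2 : ℝ) + 2) ^ (2 * a 0) * (1 / ((p.1 : ℝ) + 1) ^ (2 * a 1))

private noncomputable def seqA (l j : ℕ) : ℝ :=
  1 / ((j : ℝ) + 1) ^ (2 * l + 2) * (Hsum (2 * j + 2) / (2 * ((j : ℝ) + 1)))

private noncomputable def seqB (l j : ℕ) : ℝ :=
  1 / ((j : ℝ) + 1) ^ (2 * l + 2) *
    (1 / (2 * ((j : ℝ) + 1)) * (Hsum j + Hsum (2 * j + 1) - Hsum (j + 1)))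

/- ### Elementary series computations -/

private lemma aux_tendsto_zero (x : ℕ) :
    Filter.Tendsto (fun N : ℕ => 1 / ((N : ℝ) + (x : ℝ) + 1)) Filter.atTop (nhds 0) := by
  have h : Filter.Tendsto (fun N : ℕ => ((N : ℝ) + ((x : ℝ) + 1))) Filter.atTop Filter.atTop :=
    Filter.tendsto_atTop_add_const_right _ ((x : ℝ) + 1) tendsto_natCast_atTop_atTop
  exact Filter.Tendsto.congr (fun N => by simp [Pi.inv_apply, one_div, add_assoc]) h.inv_tendsto_atTop

private lemma hasSum_telescope (c : ℕ) :
    HasSum (fun d : ℕ => 1 / ((d : ℝ) + 1) - 1 / ((d : ℝ) + 1 + (c : ℝ))) (Hsum c) := by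
  have hnonneg : ∀ d : ℕ, 0 ≤ 1 / ((d : ℝ) + 1) - 1 / ((d : ℝ) + 1 + (c : ℝ)) := by
    intro d
    have h1 : (0 : ℝ) < (d : ℝ) + 1 := by positivity
    have h2 : ((d : ℝ) + 1) ≤ (d : ℝ) + 1 + (c : ℝ) := by
      have : (0 : ℝ) ≤ (c : ℝ) := Nat.cast_nonneg c
      linarith
    exact sub_nonneg.2 (one_div_le_one_div_of_le h1 h2)
  rw [hasSum_iff_tendsto_nat_of_nonneg hnonneg]
  have hterm : ∀ d : ℕ, 1 / ((d : ℝ) + 1) - 1 / ((d : ℝ) + 1 + (c : ℝ))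
      = 1 / ((d : ℝ) + 1) - 1 / (((d + c : ℕ) : ℝ) + 1) := by
    intro d; push_cast; ring_nf
  have hpartial : ∀ N : ℕ,
      ∑ d ∈ Finset.range N, (1 / ((d : ℝ) + 1) - 1 / ((d : ℝ) + 1 + (c : ℝ)))
        = Hsum c - ∑ x ∈ Finset.range c, 1 / (((N + x : ℕ) : ℝ) + 1) := by
    intro N
    rw [Finset.sum_congr rfl fun d _ => hterm d, Finset.sum_sub_distrib]
    have e1 : ∑ d ∈ Finset.range (c + N), (1 / ((d : ℝ) + 1))
        = Hsum c + ∑ d ∈ Finset.range N, 1 / (((c + d : ℕ) : ℝ) + 1) := by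
      rw [Finset.sum_range_add]; rfl
    have e2 : ∑ d ∈ Finset.range (N + c), (1 / ((d : ℝ) + 1))
        = (∑ d ∈ Finset.range N, 1 / ((d : ℝ) + 1))
          + ∑ x ∈ Finset.range c, 1 / (((N + x : ℕ) : ℝ) + 1) := by
      rw [Finset.sum_range_add]
    have e3 : ∑ d ∈ Finset.range N, 1 / (((d + c : ℕ) : ℝ) + 1)
        = ∑ d ∈ Finset.range N, 1 / (((c + d : ℕ) : ℝ) + 1) := by
      refine Finset.sum_congr rfl fun d _ => by rw [Nat.add_comm]
    rw [e3]
    have e4 : (c + N) = (N + c) := Nat.add_comm c N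
    have := e1
    rw [e4, e2] at this
    linarith
  simp only [hpartial]
  have ht : Filter.Tendsto
      (fun N : ℕ => ∑ x ∈ Finset.range c, 1 / (((N + x : ℕ) : ℝ) + 1))
      Filter.atTop (nhds 0) := by
    have h0 : ∀ x ∈ Finset.range c, Filter.Tendsto
        (fun N : ℕ => 1 / (((N + x : ℕ) : ℝ) + 1)) Filter.atTop (nhds 0) := by
      intro x _
      have := aux_tendsto_zero x
      refine this.congr fun N => ?_
      push_cast; ring_nf
    have := tendsto_finset_sum (Finset.range c) h0
    simpa using this
  simpa using ((tendsto_const_nhds : Filter.Tendsto (fun _ : ℕ => Hsum c) Filter.atTop (nhds (Hsum c)))).sub ht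

private lemma hasSum_partial_frac (j : ℕ) :
    HasSum (fun d : ℕ => 1 / (((d : ℝ) + 1) * ((d : ℝ) + 2 * (j : ℝ) + 3)))
      (Hsum (2 * j + 2) / (2 * ((j : ℝ) + 1))) := by
  have h := (hasSum_telescope (2 * j + 2)).div_const (2 * ((j : ℝ) + 1))
  have key : ∀ d : ℕ,
      (1 / ((d : ℝ) + 1) - 1 / ((d : ℝ) + 1 + ((2 * j + 2 : ℕ) : ℝ))) / (2 * ((j : ℝ) + 1))
        = 1 / (((d : ℝ) + 1) * ((d : ℝ) + 2 * (j : ℝ) + 3)) := by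
    intro d
    have h1 : ((d : ℝ) + 1) ≠ 0 := by positivity
    have h2 : ((d : ℝ) + 2 * (j : ℝ) + 3) ≠ 0 := by positivity
    have h3 : ((j : ℝ) + 1) ≠ 0 := by positivity
    push_cast
    rw [div_eq_div_iff (by positivity) (by positivity)]
    field_simp
    ring
  exact (funext key) ▸ h

private lemma sum_range_partial_frac (j : ℕ) :
    ∑ t ∈ Finset.range j, 1 / (((j : ℝ) + 1) ^ 2 - ((t : ℝ) + 1) ^ 2)
      = 1 / (2 * ((j : ℝ) + 1)) * (Hsum j + Hsum (2 * j + 1) - Hsum (j + 1)) := by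
  have hrefl : ∑ t ∈ Finset.range j, 1 / ((j : ℝ) - (t : ℝ)) = Hsum j := by
    rw [Hsum, ← Finset.sum_range_reflect (fun t => 1 / ((t : ℝ) + 1)) j]
    refine Finset.sum_congr rfl fun t ht => ?_
    rw [Finset.mem_range] at ht
    congr 1
    have e : (j - 1 - t) + 1 = j - t := by omega
    have e2 : ((j - 1 - t : ℕ) : ℝ) + 1 = ((j - t : ℕ) : ℝ) := by
      rw [← e]; push_cast; ring
    rw [e2, Nat.cast_sub (le_of_lt ht)]
  have hshift : ∑ t ∈ Finset.range j, 1 / ((j : ℝ) + (t : ℝ) + 2)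
      = Hsum (2 * j + 1) - Hsum (j + 1) := by
    have e : Hsum (2 * j + 1)
        = Hsum (j + 1) + ∑ x ∈ Finset.range j, 1 / (((j + 1 + x : ℕ) : ℝ) + 1) := by
      rw [Hsum, Hsum, show 2 * j + 1 = (j + 1) + j by omega, Finset.sum_range_add]
    rw [e]
    have e3 : ∑ x ∈ Finset.range j, 1 / (((j + 1 + x : ℕ) : ℝ) + 1)
        = ∑ t ∈ Finset.range j, 1 / ((j : ℝ) + (t : ℝ) + 2) := by
      refine Finset.sum_congr rfl fun t _ => ?_
      push_cast; ring_nf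
    rw [e3]; ring
  have hterm : ∀ t ∈ Finset.range j, 1 / (((j : ℝ) + 1) ^ 2 - ((t : ℝ) + 1) ^ 2)
      = 1 / (2 * ((j : ℝ) + 1)) * (1 / ((j : ℝ) - (t : ℝ)) + 1 / ((j : ℝ) + (t : ℝ) + 2)) := by
    intro t ht
    rw [Finset.mem_range] at ht
    have h1 : (0 : ℝ) < (j : ℝ) - (t : ℝ) := by
      have : (t : ℝ) < (j : ℝ) := by exact_mod_cast ht
      linarith
    have h2 : (0 : ℝ) < (j : ℝ) + (t : ℝ) + 2 := by positivity
    have h3 : (0 : ℝ) < (j : ℝ) + 1 := by positivity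
    have hd : ((j : ℝ) + 1) ^ 2 - ((t : ℝ) + 1) ^ 2 = ((j : ℝ) - t) * ((j : ℝ) + t + 2) := by
      ring
    rw [hd]
    field_simp
    ring
  rw [Finset.sum_congr rfl hterm, ← Finset.mul_sum, Finset.sum_add_distrib, hrefl, hshift]
  ring

/- ### The index equivalence -/

private def pairEquiv : ℕ × ℕ ≃ {f : Fin 2 → ℕ // StrictAnti f ∧ ∀ i, 0 < f i} where
  toFun p := ⟨![p.1 + p.2 + 2, p.1 + 1], by
    constructor
    · intro x y hxy
      fin_cases x <;> fin_cases y <;>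
        simp_all [Matrix.cons_val_zero, Matrix.cons_val_one, Matrix.head_cons] <;> omega
    · intro i; fin_cases i <;> simp⟩
  invFun t := (t.1 1 - 1, t.1 0 - t.1 1 - 1)
  left_inv p := by
    simp only [Matrix.cons_val_one, Matrix.head_cons, Matrix.cons_val_zero]
    ext <;> simp <;> omega
  right_inv t := by
    obtain ⟨f, hanti, hpos⟩ := t
    have h01 : f 1 < f 0 := hanti (show (0 : Fin 2) < 1 by norm_num)
    have h1 : 0 < f 1 := hpos 1
    apply Subtype.ext
    funext i
    fin_cases i <;>
      simp [Matrix.cons_val_zero, Matrix.cons_val_one, Matrix.head_cons] <;> omega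

/- ### Summability -/

private lemma summable_sq : Summable (fun j : ℕ => 1 / ((j : ℝ) + 1) ^ 2) := by
  have h0 : Summable (fun n : ℕ => 1 / (n : ℝ) ^ 2) := Real.summable_one_div_nat_pow.mpr one_lt_two
  have := (summable_nat_add_iff (f := fun n : ℕ => 1 / (n : ℝ) ^ 2) 1).mpr h0
  exact this.congr fun j => by push_cast; ring

private lemma summable_auxBase : Summable auxBase := by
  have := summable_sq.mul_of_nonneg summable_sq (fun j => by positivity) (fun j => by positivity)
  exact this.congr fun p => rfl

private lemma auxA_nonneg (l : ℕ) (p : ℕ × ℕ) : 0 ≤ auxA l p := by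
  rw [auxA]; positivity

private lemma auxB_nonneg (l : ℕ) (p : ℕ × ℕ) : 0 ≤ auxB l p := by
  rw [auxB]; positivity

private lemma auxBind_nonneg (l : ℕ) (q : ℕ × ℕ) : 0 ≤ auxBind l q := by
  rw [auxBind]
  split
  · rename_i h
    have h2 : ((q.2 : ℝ) + 1) ^ 2 < ((q.1 : ℝ) + 1) ^ 2 := by
      have : (q.2 : ℝ) < (q.1 : ℝ) := by exact_mod_cast h
      nlinarith [Nat.cast_nonneg (α := ℝ) q.2]
    have h3 : (0 : ℝ) < ((q.1 : ℝ) + 1) ^ (2 * l + 2) * (((q.1 : ℝ) + 1) ^ 2 - ((q.2 : ℝ) + 1) ^ 2) :=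
      mul_pos (by positivity) (sub_pos.mpr h2)
    exact le_of_lt (one_div_pos.mpr h3)
  · exact le_rfl

private lemma auxBase_eq (p : ℕ × ℕ) :
    auxBase p = 1 / (((p.1 : ℝ) + 1) ^ 2 * ((p.2 : ℝ) + 1) ^ 2) := by
  rw [auxBase, div_mul_div_comm, one_mul]

private lemma summable_auxA (l : ℕ) : Summable (auxA l) := by
  refine summable_auxBase.of_nonneg_of_le (auxA_nonneg l) fun p => ?_
  set x := (p.1 : ℝ) with hx
  set y := (p.2 : ℝ) with hy
  have hx0 : 0 ≤ x := Nat.cast_nonneg _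
  have hy0 : 0 ≤ y := Nat.cast_nonneg _
  have h1 : (x + 1) ^ 2 * ((y + 1) ^ 2)
      ≤ (x + 1) ^ (2 * l + 2) * ((y + 1) * (y + 2 * x + 3)) := by
    have e1 : (x + 1) ^ 2 ≤ (x + 1) ^ (2 * l + 2) :=
      pow_le_pow_right₀ (by linarith) (by omega)
    have e2 : (y + 1) ^ 2 ≤ (y + 1) * (y + 2 * x + 3) := by nlinarith
    exact mul_le_mul e1 e2 (by positivity) (by positivity)
  rw [auxA, auxBase_eq]
  exact one_div_le_one_div_of_le (by positivity) h1

private lemma summable_auxB (l : ℕ) : Summable (auxB l) := by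
  refine summable_auxBase.of_nonneg_of_le (auxB_nonneg l) fun p => ?_
  set x := (p.1 : ℝ) with hx
  set y := (p.2 : ℝ) with hy
  have hx0 : 0 ≤ x := Nat.cast_nonneg _
  have hy0 : 0 ≤ y := Nat.cast_nonneg _
  have h1 : (x + 1) ^ 2 * ((y + 1) ^ 2)
      ≤ (x + y + 2) ^ (2 * l + 2) * ((y + 1) * (y + 2 * x + 3)) := by
    have e1 : (x + y + 2) ^ 2 ≤ (x + y + 2) ^ (2 * l + 2) :=
      pow_le_pow_right₀ (by linarith) (by omega)
    have e2 : (x + 1) ^ 2 * ((y + 1) ^ 2) ≤ (x + y + 2) ^ 2 * ((y + 1) * (y + 2 * x + 3)) := by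
      nlinarith [sq_nonneg (x - y), mul_nonneg hx0 hy0, mul_nonneg (mul_nonneg hx0 hy0) hy0,
        mul_nonneg (mul_nonneg hx0 hx0) hy0]
    calc (x + 1) ^ 2 * ((y + 1) ^ 2) ≤ (x + y + 2) ^ 2 * ((y + 1) * (y + 2 * x + 3)) := e2
    _ ≤ (x + y + 2) ^ (2 * l + 2) * ((y + 1) * (y + 2 * x + 3)) := by
        exact mul_le_mul_of_nonneg_right e1 (by positivity)
  rw [auxB, auxBase_eq]
  exact one_div_le_one_div_of_le (by positivity) h1

/- ### The key algebraic identity -/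

private lemma telescope_finite (l : ℕ) (X Y : ℝ) :
    (∑ i ∈ Finset.Ioo 0 (l + 2), X ^ i * Y ^ (l + 2 - i)) * (Y - X)
      = X * Y ^ (l + 2) - X ^ (l + 2) * Y := by
  have hIoo : Finset.Ioo 0 (l + 2) = Finset.Ico 1 (l + 2) := by
    ext t; simp only [Finset.mem_Ioo, Finset.mem_Ico]; omega
  rw [Finset.sum_mul, hIoo, Finset.sum_Ico_eq_sum_range]
  have hsimp : ∀ i ∈ Finset.range (l + 2 - 1),
      X ^ (1 + i) * Y ^ (l + 2 - (1 + i)) * (Y - X)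
        = (fun t => X ^ (t + 1) * Y ^ (l + 2 - t)) i
          - (fun t => X ^ (t + 1) * Y ^ (l + 2 - t)) (i + 1) := by
    intro i hi
    rw [Finset.mem_range] at hi
    beta_reduce
    have e2 : l + 2 - (1 + i) = l + 1 - i := by omega
    have e3 : l + 2 - i = (l + 1 - i) + 1 := by omega
    have e4 : l + 2 - (i + 1) = l + 1 - i := by omega
    rw [e2, e3, e4, show 1 + i = i + 1 by omega]
    generalize (l + 1 - i) = b
    ring
  rw [Finset.sum_congr rfl hsimp, Finset.sum_range_sub']
  beta_reduce
  rw [show l + 2 - 1 = l + 1 by omega, show l + 2 - (l + 1) = 1 by omega,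
    show l + 2 - 0 = l + 2 by omega]
  ring

private lemma claim2 (l : ℕ) (K M : ℝ) (hK : 0 < K) (hKM : K < M) :
    (1 / (K ^ (l + 1) * (M - K)) - 1 / (M ^ (l + 1) * (M - K))) * (K⁻¹ - M⁻¹)
      = M⁻¹ * (K⁻¹) ^ (l + 2) - (M⁻¹) ^ (l + 2) * K⁻¹ := by
  have hM : 0 < M := lt_trans hK hKM
  have hMK : M - K ≠ 0 := ne_of_gt (sub_pos.mpr hKM)
  have hK' : K ≠ 0 := ne_of_gt hK
  have hM' : M ≠ 0 := ne_of_gt hM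
  rw [inv_pow, inv_pow]
  field_simp
  ring

private lemma auxF_eq (l : ℕ) (p : ℕ × ℕ) : auxF l p = auxA l p - auxB l p := by
  have hx0 : (0 : ℝ) ≤ (p.1 : ℝ) := Nat.cast_nonneg _
  have hy0 : (0 : ℝ) ≤ (p.2 : ℝ) := Nat.cast_nonneg _
  have hK0 : (0 : ℝ) < ((p.1 : ℝ) + 1) ^ 2 := by positivity
  have hM0 : (0 : ℝ) < ((p.1 : ℝ) + (p.2 : ℝ) + 2) ^ 2 := by positivity
  have hKM : ((p.1 : ℝ) + 1) ^ 2 < ((p.1 : ℝ) + (p.2 : ℝ) + 2) ^ 2 := by nlinarith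
  have hYX : (((p.1 : ℝ) + (p.2 : ℝ) + 2) ^ 2)⁻¹ < (((p.1 : ℝ) + 1) ^ 2)⁻¹ := by
    have := one_div_lt_one_div_of_lt hK0 hKM
    simpa [one_div] using this
  have hne : (((p.1 : ℝ) + 1) ^ 2)⁻¹ - (((p.1 : ℝ) + (p.2 : ℝ) + 2) ^ 2)⁻¹ ≠ 0 :=
    ne_of_gt (sub_pos.mpr hYX)
  apply mul_right_cancel₀ hne
  have h1 : auxF l p = ∑ i ∈ Finset.Ioo 0 (l + 2),
      ((((p.1 : ℝ) + (p.2 : ℝ) + 2) ^ 2)⁻¹) ^ i * (((((p.1 : ℝ) + 1) ^ 2)⁻¹) ^ (l + 2 - i)) := by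
    rw [auxF]
    refine Finset.sum_congr rfl fun i _ => ?_
    rw [inv_pow, inv_pow, ← pow_mul, ← pow_mul, one_div, one_div]
  have hA_eq : auxA l p = 1 / ((((p.1 : ℝ) + 1) ^ 2) ^ (l + 1) *
      (((p.1 : ℝ) + (p.2 : ℝ) + 2) ^ 2 - ((p.1 : ℝ) + 1) ^ 2)) := by
    rw [auxA, show 2 * l + 2 = 2 * (l + 1) by ring, pow_mul]
    congr 2
    ring
  have hB_eq : auxB l p = 1 / ((((p.1 : ℝ) + (p.2 : ℝ) + 2) ^ 2) ^ (l + 1) *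
      (((p.1 : ℝ) + (p.2 : ℝ) + 2) ^ 2 - ((p.1 : ℝ) + 1) ^ 2)) := by
    rw [auxB, show 2 * l + 2 = 2 * (l + 1) by ring, pow_mul]
    congr 2
    ring
  rw [h1, telescope_finite, hA_eq, hB_eq, claim2 l _ _ hK0 hKM]

/- ### The mzv side -/

private lemma pow_one_div_le (u v : ℝ) (e : ℕ) (hu : 1 ≤ u) (huv : u ≤ v) (he : 1 ≤ e) :
    1 / v ^ (2 * e) ≤ 1 / u ^ 2 := by
  have hu0 : (0 : ℝ) < u := by linarith
  apply one_div_le_one_div_of_le (by positivity)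
  calc u ^ 2 ≤ v ^ 2 := by nlinarith
  _ ≤ v ^ (2 * e) := pow_le_pow_right₀ (by linarith) (by omega)

private lemma auxG_le (a : Fin 2 → ℕ) (h0 : 1 ≤ a 0) (h1 : 1 ≤ a 1) (p : ℕ × ℕ) :
    auxG a p ≤ auxBase p := by
  have hx0 : (0 : ℝ) ≤ (p.1 : ℝ) := Nat.cast_nonneg _
  have hy0 : (0 : ℝ) ≤ (p.2 : ℝ) := Nat.cast_nonneg _
  have f1 : 1 / ((p.1 : ℝ) + (p.2 : ℝ) + 2) ^ (2 * a 0) ≤ 1 / ((p.2 : ℝ) + 1) ^ 2 :=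
    pow_one_div_le ((p.2 : ℝ) + 1) _ (a 0) (by linarith) (by linarith) h0
  have f2 : 1 / ((p.1 : ℝ) + 1) ^ (2 * a 1) ≤ 1 / ((p.1 : ℝ) + 1) ^ 2 :=
    pow_one_div_le ((p.1 : ℝ) + 1) _ (a 1) (by linarith) le_rfl h1
  rw [auxG]
  calc 1 / ((p.1 : ℝ) + (p.2 : ℝ) + 2) ^ (2 * a 0) * (1 / ((p.1 : ℝ) + 1) ^ (2 * a 1))
      ≤ 1 / ((p.2 : ℝ) + 1) ^ 2 * (1 / ((p.1 : ℝ) + 1) ^ 2) :=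
        mul_le_mul f1 f2 (by positivity) (by positivity)
  _ = auxBase p := by rw [auxBase]; ring

private lemma summable_auxG (a : Fin 2 → ℕ) (h0 : 1 ≤ a 0) (h1 : 1 ≤ a 1) :
    Summable (auxG a) :=
  summable_auxBase.of_nonneg_of_le (fun p => by rw [auxG]; positivity) (auxG_le a h0 h1)

private lemma mzv_eq (a : Fin 2 → ℕ) :
    mzv (fun i => 2 * a i) = ∑' p : ℕ × ℕ, auxG a p := by
  rw [mzv, ← pairEquiv.tsum_eq]
  refine tsum_congr fun p => ?_
  rw [auxG]
  simp only [pairEquiv, Equiv.coe_fn_mk, Fin.prod_univ_two, Matrix.cons_val_zero,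
    Matrix.cons_val_one, Matrix.head_cons]
  push_cast
  ring

private lemma mem_S_iff (l : ℕ) (a : Fin 2 → ℕ) :
    a ∈ (Finset.Nat.antidiagonalTuple 2 (l + 2)).filter (fun a => ∀ i, 0 < a i)
      ↔ (a 0 + a 1 = l + 2 ∧ 0 < a 0 ∧ 0 < a 1) := by
  rw [Finset.mem_filter, Finset.Nat.mem_antidiagonalTuple]
  constructor
  · rintro ⟨hsum, hpos⟩
    refine ⟨?_, hpos 0, hpos 1⟩
    rw [← Fin.sum_univ_two a]; exact hsum
  · rintro ⟨hsum, h0, h1⟩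
    refine ⟨by rw [Fin.sum_univ_two]; exact hsum, fun i => ?_⟩
    fin_cases i
    · exact h0
    · exact h1

private lemma sum_S (l : ℕ) (p : ℕ × ℕ) :
    (∑ a ∈ (Finset.Nat.antidiagonalTuple 2 (l + 2)).filter (fun a => ∀ i, 0 < a i),
      auxG a p) = auxF l p := by
  rw [auxF]
  apply Finset.sum_nbij' (fun a => a 0) (fun i => ![i, l + 2 - i])
  · intro a ha
    rw [mem_S_iff] at ha
    rw [Finset.mem_Ioo]
    omega
  · intro i hi
    rw [Finset.mem_Ioo] at hi
    rw [mem_S_iff]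
    refine ⟨?_, ?_, ?_⟩ <;>
      simp only [Matrix.cons_val_zero, Matrix.cons_val_one, Matrix.head_cons] <;> omega
  · intro a ha
    rw [mem_S_iff] at ha
    have h2 : ![a 0, l + 2 - a 0] 1 = a 1 := by
      simp only [Matrix.cons_val_one, Matrix.head_cons, Matrix.cons_val_zero]
      omega
    funext t
    fin_cases t
    · rfl
    · exact h2
  · intro i _
    simp
  · intro a ha
    rw [mem_S_iff] at ha
    rw [auxG, show 2 * a 1 = 2 * (l + 2 - a 0) by omega]

/- ### The per-row sums -/

private lemma hasSum_auxA (l j : ℕ) : HasSum (fun d => auxA l (j, d)) (seqA l j) := by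
  have h := (hasSum_partial_frac j).mul_left (1 / ((j : ℝ) + 1) ^ (2 * l + 2))
  have e : (fun d : ℕ => 1 / ((j : ℝ) + 1) ^ (2 * l + 2) *
      (1 / (((d : ℝ) + 1) * ((d : ℝ) + 2 * (j : ℝ) + 3)))) = fun d => auxA l (j, d) := by
    funext d
    show _ = auxA l (j, d)
    rw [auxA]
    show 1 / ((j : ℝ) + 1) ^ (2 * l + 2) * (1 / (((d : ℝ) + 1) * ((d : ℝ) + 2 * (j : ℝ) + 3)))
      = 1 / (((j : ℝ) + 1) ^ (2 * l + 2) * (((d : ℝ) + 1) * ((d : ℝ) + 2 * (j : ℝ) + 3)))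
    rw [div_mul_div_comm, one_mul]
  rw [seqA]
  exact e ▸ h

private lemma hasSum_auxBind (l j : ℕ) : HasSum (fun t => auxBind l (j, t)) (seqB l j) := by
  have hfin : ∀ t ∉ Finset.range j, auxBind l (j, t) = 0 := by
    intro t ht
    rw [Finset.mem_range] at ht
    rw [auxBind, if_neg]
    exact ht
  have h : HasSum (fun t => auxBind l (j, t)) (∑ t ∈ Finset.range j, auxBind l (j, t)) :=
    hasSum_sum_of_ne_finset_zero hfin
  have hval : ∑ t ∈ Finset.range j, auxBind l (j, t) = seqB l j := by
    have e : ∀ t ∈ Finset.range j, auxBind l (j, t)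
        = 1 / ((j : ℝ) + 1) ^ (2 * l + 2) * (1 / (((j : ℝ) + 1) ^ 2 - ((t : ℝ) + 1) ^ 2)) := by
      intro t ht
      rw [Finset.mem_range] at ht
      rw [auxBind, if_pos ht]
      show 1 / (((j : ℝ) + 1) ^ (2 * l + 2) * (((j : ℝ) + 1) ^ 2 - ((t : ℝ) + 1) ^ 2)) = _
      rw [div_mul_div_comm, one_mul]
    rw [Finset.sum_congr rfl e, ← Finset.mul_sum, sum_range_partial_frac, seqB]
  rw [← hval]
  exact h

theorem E_two (n : ℕ) (hn : 2 ≤ n) :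
    E n 2 = 3 / 4 * rzeta (2 * n) := by
  obtain ⟨l, rfl⟩ : ∃ l, n = l + 2 := ⟨n - 2, by omega⟩
  -- Step 1 : E = ∑' p, auxF l p
  have hsummand : ∀ a ∈ (Finset.Nat.antidiagonalTuple 2 (l + 2)).filter
      (fun a : Fin 2 → ℕ => ∀ i, 0 < a i), Summable (auxG a) := by
    intro a ha
    rw [mem_S_iff] at ha
    exact summable_auxG a ha.2.1 ha.2.2
  have hE2 : E (l + 2) 2 = ∑' p : ℕ × ℕ, auxF l p := by
    rw [E, Finset.sum_congr rfl fun a _ => mzv_eq a, ← Summable.tsum_finsetSum hsummand]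
    exact tsum_congr fun p => sum_S l p
  -- Step 2 : transfer auxB to auxBind
  have hinj : Function.Injective (fun p : ℕ × ℕ => (p.1 + p.2 + 1, p.1)) := by
    intro p q h
    rw [Prod.mk.injEq] at h
    obtain ⟨h1, h2⟩ := h
    rw [Prod.ext_iff]
    exact ⟨h2, by omega⟩
  have hrange : ∀ q : ℕ × ℕ, q ∉ Set.range (fun p : ℕ × ℕ => (p.1 + p.2 + 1, p.1)) →
      auxBind l q = 0 := by
    intro q hq
    have hnot : ¬ (q.2 < q.1) := by
      intro hlt
      refine hq ⟨(q.2, q.1 - q.2 - 1), ?_⟩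
      rw [Prod.ext_iff]
      refine ⟨?_, rfl⟩
      show q.2 + (q.1 - q.2 - 1) + 1 = q.1
      omega
    rw [auxBind, if_neg hnot]
  have hBindB : ∀ p : ℕ × ℕ, auxB l p = auxBind l (p.1 + p.2 + 1, p.1) := by
    intro p
    have hc : p.1 < p.1 + p.2 + 1 := by omega
    rw [auxB]
    show _ = auxBind l (p.1 + p.2 + 1, p.1)
    rw [auxBind]
    rw [if_pos (show (p.1 + p.2 + 1, p.1).2 < (p.1 + p.2 + 1, p.1).1 from hc)]
    show _ = 1 / ((((p.1 + p.2 + 1 : ℕ) : ℝ) + 1) ^ (2 * l + 2) *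
      ((((p.1 + p.2 + 1 : ℕ) : ℝ) + 1) ^ 2 - ((p.1 : ℝ) + 1) ^ 2))
    congr 1
    push_cast
    ring
  have hBind_sum : Summable (auxBind l) :=
    (hinj.summable_iff hrange).mp ((summable_auxB l).congr hBindB)
  have hBsum_eq : ∑' p : ℕ × ℕ, auxB l p = ∑' q : ℕ × ℕ, auxBind l q := by
    rw [tsum_congr hBindB]
    exact hinj.tsum_eq (Function.support_subset_iff'.mpr hrange)
  -- Step 3 : row sums
  have hSA : ∑' p : ℕ × ℕ, auxA l p = ∑' j : ℕ, seqA l j := by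
    rw [Summable.tsum_prod' (summable_auxA l) (fun b => (hasSum_auxA l b).summable)]
    exact tsum_congr fun j => (hasSum_auxA l j).tsum_eq
  have hSBind : ∑' q : ℕ × ℕ, auxBind l q = ∑' j : ℕ, seqB l j := by
    rw [Summable.tsum_prod' hBind_sum (fun b => (hasSum_auxBind l b).summable)]
    exact tsum_congr fun j => (hasSum_auxBind l j).tsum_eq
  have houterA : Summable (fun j => seqA l j) := by
    have h := ((summable_prod_of_nonneg (fun p => auxA_nonneg l p)).mp (summable_auxA l)).2
    exact h.congr fun j => (hasSum_auxA l j).tsum_eq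
  have houterB : Summable (fun j => seqB l j) := by
    have h := ((summable_prod_of_nonneg (fun q => auxBind_nonneg l q)).mp hBind_sum).2
    exact h.congr fun j => (hasSum_auxBind l j).tsum_eq
  -- Step 4 : the termwise difference
  have hfinal : ∀ j : ℕ, seqA l j - seqB l j = 3 / 4 * (1 / ((j : ℝ) + 1) ^ (2 * (l + 2))) := by
    intro j
    have hc : (0 : ℝ) < (j : ℝ) + 1 := by positivity
    have h1 : Hsum (2 * j + 2) = Hsum (2 * j + 1) + 1 / (2 * ((j : ℝ) + 1)) := by
      rw [show 2 * j + 2 = (2 * j + 1) + 1 by omega, Hsum, Hsum, Finset.sum_range_succ]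
      push_cast
      ring
    have h2 : Hsum (j + 1) = Hsum j + 1 / ((j : ℝ) + 1) := by
      rw [Hsum, Hsum, Finset.sum_range_succ]
    have hpow : ((j : ℝ) + 1) ^ (2 * (l + 2)) = ((j : ℝ) + 1) ^ (2 * l + 2) * ((j : ℝ) + 1) ^ 2 := by
      rw [show 2 * (l + 2) = 2 * l + 2 + 2 by omega, pow_add]
    rw [seqA, seqB, h1, h2, hpow]
    field_simp
    ring
  -- Conclusion
  calc E (l + 2) 2 = ∑' p : ℕ × ℕ, auxF l p := hE2
    _ = ∑' p : ℕ × ℕ, (auxA l p - auxB l p) := tsum_congr fun p => auxF_eq l p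
    _ = (∑' p : ℕ × ℕ, auxA l p) - ∑' p : ℕ × ℕ, auxB l p :=
        Summable.tsum_sub (summable_auxA l) (summable_auxB l)
    _ = (∑' j : ℕ, seqA l j) - ∑' j : ℕ, seqB l j := by rw [hSA, hBsum_eq, hSBind]
    _ = ∑' j : ℕ, (seqA l j - seqB l j) := (Summable.tsum_sub houterA houterB).symm
    _ = ∑' j : ℕ, 3 / 4 * (1 / ((j : ℝ) + 1) ^ (2 * (l + 2))) := tsum_congr hfinal
    _ = 3 / 4 * ∑' j : ℕ, 1 / ((j : ℝ) + 1) ^ (2 * (l + 2)) := tsum_mul_left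
    _ = 3 / 4 * rzeta (2 * (l + 2)) := by rw [rzeta]
end
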